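/- arXiv:2011.13003 — 4 statements merged into one kernel-verified Lean document; each statement's English description precedes it below -/
import Mathlib

section
/- Let C be a Krull-Schmidt category, let f : M → N and g : N → L be morphisms, and let N = ⊕_j N_j be a decomposition into indecomposable objects with inclusions i_j and projections p_j. If L is indecomposable and g∘f is a split surjection, then there exists an index j such that g∘i_j is an isomorphism and p_j∘f is a split surjection. -/
open CategoryTheory CategoryTheory.Limits

/-- A (preadditive) category is Krull–Schmidt if every object is a finite direct sum of
objects having local endomorphism rings. -/
def IsKrullSchmidt (C : Type*) [Category C] [Preadditive C] [HasFiniteBiproducts C] [HasBinaryBiproducts C] : Prop :=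
  ∀ X : C, ∃ (n : ℕ) (f : Fin n → C),
    Nonempty (X ≅ ⨁ f) ∧ ∀ j, IsLocalRing (End (f j))

section RingAux

variable {R : Type*} [Ring R] [IsLocalRing R]

/-- Noncommutative version: in a local ring, if a sum of two elements is a unit then one of
them is a unit. -/
theorem isUnit_or_isUnit_of_isUnit_add' {a b : R} (h : IsUnit (a + b)) :
    IsUnit a ∨ IsUnit b := by
  obtain ⟨u, hu⟩ := h
  have h1 : a * ↑u⁻¹ + b * ↑u⁻¹ = 1 := by
    rw [← add_mul, ← hu, Units.mul_inv]
  rcases IsLocalRing.isUnit_or_isUnit_of_add_one h1 with h | h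
  · left
    have := h.mul u.isUnit
    rwa [mul_assoc, Units.inv_mul, mul_one] at this
  · right
    have := h.mul u.isUnit
    rwa [mul_assoc, Units.inv_mul, mul_one] at this

theorem nonunits_add' {a b : R} (ha : a ∈ nonunits R) (hb : b ∈ nonunits R) :
    a + b ∈ nonunits R := fun h => (isUnit_or_isUnit_of_isUnit_add' h).elim ha hb

/-- In a local ring, an idempotent is `1` or `0`. -/
theorem idem_eq_one_or_zero {e : R} (he : e * e = e) : e = 1 ∨ e = 0 := by
  rcases IsLocalRing.isUnit_or_isUnit_of_add_one (a := e) (b := 1 - e) (by abel) with h | h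
  · left
    exact h.mul_left_cancel (by rw [he, mul_one])
  · right
    refine h.mul_left_cancel ?_
    rw [mul_zero, sub_mul, one_mul, he, sub_self]

end RingAux

section Aux

variable {C : Type*} [Category C] [Preadditive C] [HasFiniteBiproducts C] [HasBinaryBiproducts C]

/-- Transfer `IsLocalRing (End _)` along an isomorphism of objects. -/
theorem isLocalRing_End_of_iso {X Y : C} (e : X ≅ Y) (h : IsLocalRing (End X)) :
    IsLocalRing (End Y) := by
  let φ : End Y → End X := fun c => e.hom ≫ c ≫ e.inv
  have key : ∀ c : End Y, IsUnit c ↔ IsUnit (φ c) := by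
    intro c
    rw [isUnit_iff_isIso, isUnit_iff_isIso]
    constructor
    · intro hc
      show IsIso (e.hom ≫ c ≫ e.inv)
      infer_instance
    · intro hc
      have hc' : (c : Y ⟶ Y) = e.inv ≫ φ c ≫ e.hom := by simp [φ]
      rw [hc']
      haveI : IsIso (φ c : X ⟶ X) := hc
      infer_instance
  have hφadd : ∀ a b : End Y, φ (a + b) = φ a + φ b := by
    intro a b
    show e.hom ≫ (a + b) ≫ e.inv = e.hom ≫ a ≫ e.inv + e.hom ≫ b ≫ e.inv
    rw [Preadditive.add_comp, Preadditive.comp_add]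
  haveI : Nontrivial (End Y) := by
    refine ⟨⟨0, 1, fun h01 => ?_⟩⟩
    apply zero_ne_one (α := End X)
    have h01' : (0 : Y ⟶ Y) = 𝟙 Y := h01
    have h1X : (1 : End X) = 𝟙 X := rfl
    rw [h1X, ← e.hom_inv_id, ← Category.id_comp e.inv, ← h01']
    simp
  refine ⟨fun {a b} hab => ?_⟩
  have h1 : φ a + φ b = 1 := by
    rw [← hφadd, hab]
    show e.hom ≫ 𝟙 Y ≫ e.inv = (1 : End X)
    simp
  rcases IsLocalRing.isUnit_or_isUnit_of_add_one h1 with h' | h'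
  · left; rw [key]; exact h'
  · right; rw [key]; exact h'

/-- Split off the first summand of a biproduct over `Fin (n+1)`. -/
noncomputable def finSuccBiproductIso {n : ℕ} (f : Fin (n + 1) → C) :
    (⨁ f) ≅ f 0 ⊞ ⨁ (fun i : Fin n => f i.succ) where
  hom := biprod.lift (biproduct.π f 0) (biproduct.lift fun i => biproduct.π f i.succ)
  inv := biprod.desc (biproduct.ι f 0) (biproduct.desc fun i => biproduct.ι f i.succ)
  hom_inv_id := by
    rw [biprod.lift_desc, biproduct.lift_desc, ← biproduct.total, Fin.sum_univ_succ]
  inv_hom_id := by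
    have hzs : ∀ i : Fin n, ((0 : Fin (n + 1)) = i.succ) ↔ False := fun i =>
      iff_false_intro (Ne.symm (Fin.succ_ne_zero i))
    ext
    all_goals
      simp [biproduct.ι_π, Fin.succ_ne_zero, (Fin.succ_injective n).eq_iff, hzs]

/-- Biproduct with a zero left summand. -/
noncomputable def biprodIsoOfIsZeroLeft {A B : C} (hA : IsZero A) : (A ⊞ B) ≅ B where
  hom := biprod.snd
  inv := biprod.inr
  hom_inv_id := by
    ext
    all_goals first
      | apply hA.eq_of_src
      | apply hA.eq_of_tgt
      | simp
  inv_hom_id := by simp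

/-- Biproduct with a zero right summand. -/
noncomputable def biprodIsoOfIsZeroRight {A B : C} (hB : IsZero B) : (A ⊞ B) ≅ A where
  hom := biprod.fst
  inv := biprod.inl
  hom_inv_id := by
    ext
    all_goals first
      | apply hB.eq_of_src
      | apply hB.eq_of_tgt
      | simp
  inv_hom_id := by simp

/-- An indecomposable object isomorphic to a finite biproduct of objects with local
endomorphism rings has a local endomorphism ring. -/
theorem isLocalRing_End_of_indecomposable_aux :
    ∀ (n : ℕ) (f : Fin n → C), (∀ j, IsLocalRing (End (f j))) → ∀ (X : C),
      Indecomposable X → (X ≅ ⨁ f) → IsLocalRing (End X) := by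
  intro n
  induction n with
  | zero =>
    intro f hf X hX e
    exfalso
    apply hX.1
    refine IsZero.of_iso ?_ e
    rw [IsZero.iff_id_eq_zero]
    apply biproduct.hom_ext
    intro j
    exact j.elim0
  | succ n ih =>
    intro f hf X hX e
    have e2 : X ≅ f 0 ⊞ ⨁ (fun i : Fin n => f i.succ) := e ≪≫ finSuccBiproductIso f
    rcases hX.2 _ _ e2 with h0 | hs
    · exact ih _ (fun j => hf j.succ) X hX (e2 ≪≫ biprodIsoOfIsZeroLeft h0)
    · exact isLocalRing_End_of_iso (e2 ≪≫ biprodIsoOfIsZeroRight hs).symm (hf 0)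

/-- In a Krull–Schmidt category, indecomposable objects have local endomorphism rings. -/
theorem isLocalRing_End_of_indecomposable (hKS : IsKrullSchmidt C) {X : C}
    (hX : Indecomposable X) : IsLocalRing (End X) := by
  obtain ⟨n, d, ⟨⟨e⟩, hd⟩⟩ := hKS X
  exact isLocalRing_End_of_indecomposable_aux n d hd X hX e

end Aux

/-- The key step: if `a ≫ b` is an isomorphism, `End X` is local and `L` is nonzero, then
`b` is an isomorphism and `b ≫ inv (a ≫ b) ≫ a = 𝟙 X`. -/
theorem aux_step {C : Type*} [Category C] [Preadditive C]
    {L X : C} (hL : ¬ IsZero L) (hX : IsLocalRing (End X))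
    (a : L ⟶ X) (b : X ⟶ L) [h : IsIso (a ≫ b)] :
    IsIso b ∧ b ≫ inv (a ≫ b) ≫ a = 𝟙 X := by
  have hee : (b ≫ inv (a ≫ b) ≫ a) ≫ (b ≫ inv (a ≫ b) ≫ a) = b ≫ inv (a ≫ b) ≫ a := by
    simp only [Category.assoc]
    rw [← Category.assoc a b (inv (a ≫ b) ≫ a), IsIso.hom_inv_id_assoc]
  have hmul : (show End X from b ≫ inv (a ≫ b) ≫ a) * (show End X from b ≫ inv (a ≫ b) ≫ a)
      = (show End X from b ≫ inv (a ≫ b) ≫ a) := hee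
  rcases idem_eq_one_or_zero hmul with h1 | h0
  · have h1' : b ≫ inv (a ≫ b) ≫ a = 𝟙 X := h1
    refine ⟨⟨⟨inv (a ≫ b) ≫ a, h1', ?_⟩⟩, h1'⟩
    rw [Category.assoc, IsIso.inv_hom_id]
  · exfalso
    have h0' : b ≫ inv (a ≫ b) ≫ a = (0 : X ⟶ X) := h0
    have heb : (b ≫ inv (a ≫ b) ≫ a) ≫ b = b := by
      simp only [Category.assoc]
      rw [IsIso.inv_hom_id (a ≫ b)]
      simp
    rw [h0', zero_comp] at heb
    have hab0 : a ≫ b = 0 := by rw [← heb, comp_zero]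
    apply hL
    rw [IsZero.iff_id_eq_zero]
    calc 𝟙 L = inv (a ≫ b) ≫ (a ≫ b) := (IsIso.inv_hom_id _).symm
      _ = inv (a ≫ b) ≫ 0 := congrArg (fun t => inv (a ≫ b) ≫ t) hab0
      _ = 0 := comp_zero

/-- In a Krull–Schmidt category, if `f : M ⟶ N`, `g : N ⟶ L`,
`N = ⊕_j N_j` with all `N_j` indecomposable, `L` is indecomposable and `g ∘ f` is a split
surjection, then for some `j` the composite `g ∘ i_j` is an isomorphism and `p_j ∘ f` is a
split surjection. -/
theorem krullSchmidt_split_epi_through_biproduct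
    {C : Type*} [Category C] [Preadditive C] [HasFiniteBiproducts C] [HasBinaryBiproducts C]
    (hKS : IsKrullSchmidt C)
    {J : Type} [Fintype J] (N : J → C) (hN : ∀ j, Indecomposable (N j))
    {M L : C} (f : M ⟶ ⨁ N) (g : ⨁ N ⟶ L)
    (hL : Indecomposable L) (hgf : IsSplitEpi (f ≫ g)) :
    ∃ j : J, IsIso (biproduct.ι N j ≫ g) ∧ IsSplitEpi (f ≫ biproduct.π N j) := by
  classical
  haveI hLloc : IsLocalRing (End L) := isLocalRing_End_of_indecomposable hKS hL
  obtain ⟨⟨s, hs⟩⟩ := hgf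
  have total : ∑ j, (s ≫ f ≫ biproduct.π N j) ≫ (biproduct.ι N j ≫ g) = 𝟙 L := by
    have h1 : ∑ j, (s ≫ f ≫ biproduct.π N j) ≫ (biproduct.ι N j ≫ g)
        = (s ≫ f) ≫ (∑ j, biproduct.π N j ≫ biproduct.ι N j) ≫ g := by
      rw [Preadditive.sum_comp, Preadditive.comp_sum]
      simp [Category.assoc]
    rw [h1, biproduct.total, Category.id_comp, Category.assoc]
    exact hs
  have hiso : ∃ j, IsIso ((s ≫ f ≫ biproduct.π N j) ≫ (biproduct.ι N j ≫ g)) := by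
    by_contra hcon
    push_neg at hcon
    have hnon : (𝟙 L : End L) ∈ nonunits (End L) := by
      rw [show (𝟙 L : End L) = ∑ j, (s ≫ f ≫ biproduct.π N j) ≫ (biproduct.ι N j ≫ g)
        from total.symm]
      exact Finset.sum_induction _ (· ∈ nonunits (End L))
        (fun a b ha hb => nonunits_add' ha hb)
        (fun h => not_isUnit_zero h)
        (fun j _ hu => hcon j ((isUnit_iff_isIso _).mp hu))
    exact hnon isUnit_one
  obtain ⟨j, hj⟩ := hiso
  haveI := hj
  haveI hNloc : IsLocalRing (End (N j)) := isLocalRing_End_of_indecomposable hKS (hN j)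
  obtain ⟨hb, hkey⟩ := aux_step hL.1 hNloc (s ≫ f ≫ biproduct.π N j) (biproduct.ι N j ≫ g)
  refine ⟨j, hb, ⟨⟨⟨(biproduct.ι N j ≫ g) ≫
    inv ((s ≫ f ≫ biproduct.π N j) ≫ (biproduct.ι N j ≫ g)) ≫ s, ?_⟩⟩⟩⟩
  simp only [Category.assoc] at hkey ⊢
  exact hkey
end

section
/- Let C be an additive idempotent-complete category and C• a cochain complex of the form ⋯ → C^{i-1} → C^i → Z ⊕ W → C^{i+2} → ⋯ where the component a : C^i → Z of the differential is a split surjection. Then C• is homotopy equivalent to a complex ⋯ → C^{i-1} → Y → W → C^{i+2} → ⋯ for some object Y with C^i ≅ Y ⊕ Z. -/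
open CategoryTheory CategoryTheory.Limits

set_option linter.unusedSectionVars false

namespace GaussElim

variable {C : Type*} [Category C] [Preadditive C] [HasBinaryBiproducts C]

section

variable (Kc : CochainComplex C ℤ) (i : ℤ) (W Y : C)

/-- Objects of the reduced complex. -/
def geX (j : ℤ) : C := if j = i then Y else if j = i + 1 then W else Kc.X j

lemma geX_eq_Y {j : ℤ} (h : j = i) : geX Kc i W Y j = Y := by
  simp only [geX]; rw [if_pos h]

lemma geX_eq_W {j : ℤ} (h : j = i + 1) : geX Kc i W Y j = W := by
  simp only [geX]; rw [if_neg (by omega), if_pos h]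

lemma geX_eq {j : ℤ} (h1 : j ≠ i) (h2 : j ≠ i + 1) : geX Kc i W Y j = Kc.X j := by
  simp only [geX]; rw [if_neg h1, if_neg h2]

end

section

variable (Kc : CochainComplex C ℤ) (i : ℤ) (Z W Y : C)
  (eZW : Kc.X (i + 1) ≅ Z ⊞ W)
  (b : Kc.X i ⟶ W) (ι : Y ⟶ Kc.X i) (π : Kc.X i ⟶ Y)

/-- Differentials of the reduced complex. -/
noncomputable def geD (j : ℤ) : geX Kc i W Y j ⟶ geX Kc i W Y (j + 1) :=
  if h0 : j + 1 = i then
    eqToHom (geX_eq Kc i W Y (by omega) (by omega)) ≫ Kc.d j (j + 1) ≫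
      (Kc.XIsoOfEq h0).hom ≫ π ≫ eqToHom (geX_eq_Y Kc i W Y h0).symm
  else if h1 : j = i then
    eqToHom (geX_eq_Y Kc i W Y h1) ≫ (ι ≫ b) ≫
      eqToHom (geX_eq_W Kc i W Y (by omega)).symm
  else if h2 : j = i + 1 then
    eqToHom (geX_eq_W Kc i W Y h2) ≫ biprod.inr ≫ eZW.inv ≫
      (Kc.XIsoOfEq h2.symm).hom ≫ Kc.d j (j + 1) ≫
      eqToHom (geX_eq Kc i W Y (by omega) (by omega)).symm
  else
    eqToHom (geX_eq Kc i W Y h1 h2) ≫ Kc.d j (j + 1) ≫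
      eqToHom (geX_eq Kc i W Y (by omega) (by omega)).symm

lemma geD_eval1 {j : ℤ} (h0 : j + 1 = i) :
    geD Kc i Z W Y eZW b ι π j =
    eqToHom (geX_eq Kc i W Y (by omega) (by omega)) ≫ Kc.d j (j + 1) ≫
      (Kc.XIsoOfEq h0).hom ≫ π ≫ eqToHom (geX_eq_Y Kc i W Y h0).symm :=
  dif_pos h0

lemma geD_eval2 {j : ℤ} (h1 : j = i) :
    geD Kc i Z W Y eZW b ι π j =
    eqToHom (geX_eq_Y Kc i W Y h1) ≫ (ι ≫ b) ≫
      eqToHom (geX_eq_W Kc i W Y (by omega)).symm :=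
  (dif_neg (by omega)).trans (dif_pos h1)

lemma geD_eval3 {j : ℤ} (h2 : j = i + 1) :
    geD Kc i Z W Y eZW b ι π j =
    eqToHom (geX_eq_W Kc i W Y h2) ≫ biprod.inr ≫ eZW.inv ≫
      (Kc.XIsoOfEq h2.symm).hom ≫ Kc.d j (j + 1) ≫
      eqToHom (geX_eq Kc i W Y (by omega) (by omega)).symm :=
  ((dif_neg (by omega)).trans ((dif_neg (by omega)).trans (dif_pos h2)))

lemma geD_eval4 {j : ℤ} (h0 : j + 1 ≠ i) (h1 : j ≠ i) (h2 : j ≠ i + 1) :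
    geD Kc i Z W Y eZW b ι π j =
    eqToHom (geX_eq Kc i W Y h1 h2) ≫ Kc.d j (j + 1) ≫
      eqToHom (geX_eq Kc i W Y (by omega) (by omega)).symm :=
  ((dif_neg h0).trans ((dif_neg h1).trans (dif_neg h2)))

variable (a : Kc.X i ⟶ Z) (s : Z ⟶ Kc.X i)

/-- The reduced complex. -/
noncomputable def geL
    (hdb : Kc.d (i - 1) i ≫ b = 0)
    (hda : Kc.d (i - 1) i ≫ a = 0)
    (hπι : π ≫ ι = 𝟙 (Kc.X i) - a ≫ s)
    (hιd : ι ≫ Kc.d i (i + 1) = (ι ≫ b) ≫ biprod.inr ≫ eZW.inv) :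
    CochainComplex C ℤ :=
  CochainComplex.of (geX Kc i W Y) (geD Kc i Z W Y eZW b ι π) (by
    intro n
    by_cases h0 : n + 1 = i
    · obtain rfl : n = i - 1 := by omega
      rw [geD_eval1 (h0 := h0), geD_eval2 (h1 := h0)]
      simp only [Category.assoc, eqToHom_trans_assoc, eqToHom_refl, Category.id_comp,
        HomologicalComplex.d_comp_XIsoOfEq_hom_assoc]
      rw [reassoc_of% hπι]
      simp [reassoc_of% hda, reassoc_of% hdb, hdb]
    · by_cases h1 : n = i
      · subst h1
        rw [geD_eval2 (h1 := rfl), geD_eval3 (h2 := rfl)]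
        have key := hιd =≫ Kc.d (n + 1) (n + 1 + 1)
        simp only [Category.assoc, HomologicalComplex.d_comp_d, comp_zero] at key
        simp only [Category.assoc, eqToHom_trans_assoc, eqToHom_refl, Category.id_comp,
          HomologicalComplex.XIsoOfEq_rfl, Iso.refl_hom]
        rw [reassoc_of% key.symm]
        simp
      · by_cases h2 : n = i + 1
        · subst h2
          rw [geD_eval3 (h2 := rfl),
            geD_eval4 (j := i + 1 + 1) (h0 := by omega) (h1 := by omega) (h2 := by omega)]
          simp
        · by_cases h3 : n + 1 + 1 = i
          · rw [geD_eval4 (h0 := h0) (h1 := h1) (h2 := h2),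
              geD_eval1 (j := n + 1) (h0 := h3)]
            simp
          · rw [geD_eval4 (h0 := h0) (h1 := h1) (h2 := h2),
              geD_eval4 (j := n + 1) (h0 := h3) (h1 := by omega) (h2 := by omega)]
            simp)

/-- component of the map `Kc ⟶ geL`. -/
noncomputable def gfF (t : Z ⟶ W) (j : ℤ) : Kc.X j ⟶ geX Kc i W Y j :=
  if h1 : j = i then (Kc.XIsoOfEq h1).hom ≫ π ≫ eqToHom (geX_eq_Y Kc i W Y h1).symm
  else if h2 : j = i + 1 then
    (Kc.XIsoOfEq h2).hom ≫ eZW.hom ≫ (biprod.snd - biprod.fst ≫ t) ≫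
      eqToHom (geX_eq_W Kc i W Y h2).symm
  else eqToHom (geX_eq Kc i W Y h1 h2).symm

lemma gfF_eval1 (t : Z ⟶ W) {j : ℤ} (h1 : j = i) :
    gfF Kc i Z W Y eZW π t j =
      (Kc.XIsoOfEq h1).hom ≫ π ≫ eqToHom (geX_eq_Y Kc i W Y h1).symm :=
  dif_pos h1

lemma gfF_eval2 (t : Z ⟶ W) {j : ℤ} (h2 : j = i + 1) :
    gfF Kc i Z W Y eZW π t j =
      (Kc.XIsoOfEq h2).hom ≫ eZW.hom ≫ (biprod.snd - biprod.fst ≫ t) ≫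
        eqToHom (geX_eq_W Kc i W Y h2).symm :=
  (dif_neg (by omega)).trans (dif_pos h2)

lemma gfF_eval3 (t : Z ⟶ W) {j : ℤ} (h1 : j ≠ i) (h2 : j ≠ i + 1) :
    gfF Kc i Z W Y eZW π t j = eqToHom (geX_eq Kc i W Y h1 h2).symm :=
  (dif_neg h1).trans (dif_neg h2)

/-- component of the map `geL ⟶ Kc`. -/
noncomputable def ggF (j : ℤ) : geX Kc i W Y j ⟶ Kc.X j :=
  if h1 : j = i then eqToHom (geX_eq_Y Kc i W Y h1) ≫ ι ≫ (Kc.XIsoOfEq h1).inv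
  else if h2 : j = i + 1 then
    eqToHom (geX_eq_W Kc i W Y h2) ≫ biprod.inr ≫ eZW.inv ≫ (Kc.XIsoOfEq h2).inv
  else eqToHom (geX_eq Kc i W Y h1 h2)

lemma ggF_eval1 {j : ℤ} (h1 : j = i) :
    ggF Kc i Z W Y eZW ι j = eqToHom (geX_eq_Y Kc i W Y h1) ≫ ι ≫ (Kc.XIsoOfEq h1).inv :=
  dif_pos h1

lemma ggF_eval2 {j : ℤ} (h2 : j = i + 1) :
    ggF Kc i Z W Y eZW ι j =
      eqToHom (geX_eq_W Kc i W Y h2) ≫ biprod.inr ≫ eZW.inv ≫ (Kc.XIsoOfEq h2).inv :=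
  (dif_neg (by omega)).trans (dif_pos h2)

lemma ggF_eval3 {j : ℤ} (h1 : j ≠ i) (h2 : j ≠ i + 1) :
    ggF Kc i Z W Y eZW ι j = eqToHom (geX_eq Kc i W Y h1 h2) :=
  (dif_neg h1).trans (dif_neg h2)

section Maps

variable (t : Z ⟶ W)
  (hdb : Kc.d (i - 1) i ≫ b = 0)
  (hda : Kc.d (i - 1) i ≫ a = 0)
  (hπι : π ≫ ι = 𝟙 (Kc.X i) - a ≫ s)
  (hιd : ι ≫ Kc.d i (i + 1) = (ι ≫ b) ≫ biprod.inr ≫ eZW.inv)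
  (hd : Kc.d i (i + 1) ≫ eZW.hom = biprod.lift a b)
  (hπb : π ≫ ι ≫ b = b - a ≫ t)
  (hWd : biprod.lift (𝟙 Z) t ≫ eZW.inv ≫ Kc.d (i + 1) (i + 1 + 1) = 0)

include hd hπb hWd in
/-- The chain map `Kc ⟶ geL`. -/
noncomputable def gf : Kc ⟶ geL Kc i Z W Y eZW b ι π a s hdb hda hπι hιd where
  f := gfF Kc i Z W Y eZW π t
  comm' := by
    rintro j k (rfl : j + 1 = k)
    rw [show (geL Kc i Z W Y eZW b ι π a s hdb hda hπι hιd).d j (j + 1) =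
      geD Kc i Z W Y eZW b ι π j from CochainComplex.of_d _ _ j]
    show gfF Kc i Z W Y eZW π t j ≫ geD Kc i Z W Y eZW b ι π j = Kc.d j (j + 1) ≫ gfF Kc i Z W Y eZW π t (j + 1)
    by_cases h1 : j = i
    · subst h1
      rw [gfF_eval1 (h1 := rfl), gfF_eval2 (j := j + 1) (h2 := rfl),
        geD_eval2 (h1 := rfl)]
      simp only [HomologicalComplex.XIsoOfEq_rfl, Iso.refl_hom, Category.id_comp,
        Category.assoc, eqToHom_trans_assoc, eqToHom_refl]
      rw [reassoc_of% hπb, reassoc_of% hd]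
      simp [Preadditive.sub_comp, Preadditive.comp_sub]
    · by_cases h2 : j = i + 1
      · subst h2
        rw [gfF_eval2 (h2 := rfl), gfF_eval3 (j := i + 1 + 1) (h1 := by omega) (h2 := by omega),
          geD_eval3 (h2 := rfl)]
        simp only [HomologicalComplex.XIsoOfEq_rfl, Iso.refl_hom, Category.id_comp,
          Category.assoc, eqToHom_trans_assoc, eqToHom_refl]
        have ht : (biprod.snd - biprod.fst ≫ t) ≫ (biprod.inr : W ⟶ Z ⊞ W) =
            𝟙 (Z ⊞ W) - biprod.fst ≫ biprod.lift (𝟙 Z) t := by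
          apply biprod.hom_ext <;> simp
        rw [reassoc_of% ht]
        simp [Preadditive.sub_comp, reassoc_of% hWd]
      · by_cases h3 : j + 1 = i
        · obtain rfl : j = i - 1 := by omega
          rw [gfF_eval3 (h1 := h1) (h2 := h2), gfF_eval1 (j := i - 1 + 1) (h1 := h3),
            geD_eval1 (h0 := h3)]
          simp
        · rw [gfF_eval3 (h1 := h1) (h2 := h2),
            gfF_eval3 (j := j + 1) (h1 := h3) (h2 := by omega),
            geD_eval4 (h0 := h3) (h1 := h1) (h2 := h2)]
          simp

include hd hπb hWd in
/-- The chain map `geL ⟶ Kc`. -/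
noncomputable def gg : geL Kc i Z W Y eZW b ι π a s hdb hda hπι hιd ⟶ Kc where
  f := ggF Kc i Z W Y eZW ι
  comm' := by
    rintro j k (rfl : j + 1 = k)
    rw [show (geL Kc i Z W Y eZW b ι π a s hdb hda hπι hιd).d j (j + 1) =
      geD Kc i Z W Y eZW b ι π j from CochainComplex.of_d _ _ j]
    show ggF Kc i Z W Y eZW ι j ≫ Kc.d j (j + 1) = geD Kc i Z W Y eZW b ι π j ≫ ggF Kc i Z W Y eZW ι (j + 1)
    by_cases h1 : j = i
    · subst h1
      rw [ggF_eval1 (h1 := rfl), ggF_eval2 (j := j + 1) (h2 := rfl),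
        geD_eval2 (h1 := rfl)]
      simp only [HomologicalComplex.XIsoOfEq_rfl, Iso.refl_inv, Category.comp_id,
        Category.id_comp, Category.assoc, eqToHom_trans_assoc, eqToHom_refl]
      rw [hιd]
      simp
    · by_cases h2 : j = i + 1
      · subst h2
        rw [ggF_eval2 (h2 := rfl), ggF_eval3 (j := i + 1 + 1) (h1 := by omega) (h2 := by omega),
          geD_eval3 (h2 := rfl)]
        simp
      · by_cases h3 : j + 1 = i
        · obtain rfl : j = i - 1 := by omega
          rw [ggF_eval3 (h1 := h1) (h2 := h2), ggF_eval1 (j := i - 1 + 1) (h1 := h3),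
            geD_eval1 (h0 := h3)]
          simp only [Category.assoc, eqToHom_trans_assoc, eqToHom_refl, Category.id_comp]
          rw [reassoc_of% hπι]
          simp [Preadditive.sub_comp, Preadditive.comp_sub, reassoc_of% hda]
        · rw [ggF_eval3 (h1 := h1) (h2 := h2),
            ggF_eval3 (j := j + 1) (h1 := h3) (h2 := by omega),
            geD_eval4 (h0 := h3) (h1 := h1) (h2 := h2)]
          simp

@[simp] lemma gf_f (j : ℤ) :
    (gf Kc i Z W Y eZW b ι π a s t hdb hda hπι hιd hd hπb hWd).f j =
      gfF Kc i Z W Y eZW π t j := rfl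

@[simp] lemma gg_f (j : ℤ) :
    (gg Kc i Z W Y eZW b ι π a s t hdb hda hπι hιd hd hπb hWd).f j =
      ggF Kc i Z W Y eZW ι j := rfl

lemma gg_comp_gf (hιπ : ι ≫ π = 𝟙 Y) :
    gg Kc i Z W Y eZW b ι π a s t hdb hda hπι hιd hd hπb hWd ≫
      gf Kc i Z W Y eZW b ι π a s t hdb hda hπι hιd hd hπb hWd = 𝟙 _ := by
  ext j
  simp only [HomologicalComplex.comp_f, gf_f, gg_f, HomologicalComplex.id_f]
  show ggF Kc i Z W Y eZW ι j ≫ gfF Kc i Z W Y eZW π t j = 𝟙 (geX Kc i W Y j)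
  by_cases h1 : j = i
  · subst h1
    rw [ggF_eval1 (h1 := rfl), gfF_eval1 (h1 := rfl)]
    simp [reassoc_of% hιπ, hιπ]
  · by_cases h2 : j = i + 1
    · subst h2
      rw [ggF_eval2 (h2 := rfl), gfF_eval2 (h2 := rfl)]
      simp
    · rw [ggF_eval3 (h1 := h1) (h2 := h2), gfF_eval3 (h1 := h1) (h2 := h2)]
      simp

/-- The homotopy operator. -/
noncomputable def geH (p q : ℤ) : Kc.X p ⟶ Kc.X q :=
  if h : p = i + 1 ∧ q = i then
    -((Kc.XIsoOfEq h.1).hom ≫ eZW.hom ≫ biprod.fst ≫ s ≫ (Kc.XIsoOfEq h.2).inv)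
  else 0

lemma geH_eval {p q : ℤ} (h1 : p = i + 1) (h2 : q = i) :
    geH Kc i Z W eZW s p q =
      -((Kc.XIsoOfEq h1).hom ≫ eZW.hom ≫ biprod.fst ≫ s ≫ (Kc.XIsoOfEq h2).inv) :=
  dif_pos ⟨h1, h2⟩

lemma geH_eval0 {p q : ℤ} (h : ¬(p = i + 1 ∧ q = i)) :
    geH Kc i Z W eZW s p q = 0 :=
  dif_neg h

/-- The homotopy `gf ≫ gg ∼ 𝟙`. -/
noncomputable def geHomotopy
    (hsd : s ≫ Kc.d i (i + 1) = biprod.lift (𝟙 Z) t ≫ eZW.inv) :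
    Homotopy (gf Kc i Z W Y eZW b ι π a s t hdb hda hπι hιd hd hπb hWd ≫
      gg Kc i Z W Y eZW b ι π a s t hdb hda hπι hιd hd hπb hWd) (𝟙 Kc) where
  hom := geH Kc i Z W eZW s
  zero p q hr :=
    geH_eval0 Kc i Z W eZW s (by rintro ⟨rfl, rfl⟩; exact hr (by simp))
  comm j := by
    rw [dNext_eq _ (show (ComplexShape.up ℤ).Rel j (j + 1) by simp),
      prevD_eq _ (show (ComplexShape.up ℤ).Rel (j - 1) j by simp)]
    simp only [HomologicalComplex.comp_f, gf_f, gg_f, HomologicalComplex.id_f]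
    show gfF Kc i Z W Y eZW π t j ≫ ggF Kc i Z W Y eZW ι j = _
    by_cases h1 : j = i
    · subst h1
      rw [gfF_eval1 (h1 := rfl), ggF_eval1 (h1 := rfl),
        geH_eval (h1 := rfl) (h2 := rfl), geH_eval0 (h := by omega)]
      simp only [HomologicalComplex.XIsoOfEq_rfl, Iso.refl_hom, Iso.refl_inv,
        Category.id_comp, Category.comp_id, Category.assoc, eqToHom_trans_assoc,
        eqToHom_refl, zero_comp, add_zero, Preadditive.comp_neg, Preadditive.neg_comp]
      rw [hπι, reassoc_of% hd]
      simp only [biprod.lift_fst_assoc]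
      abel
    · by_cases h2 : j = i + 1
      · subst h2
        rw [gfF_eval2 (h2 := rfl), ggF_eval2 (h2 := rfl),
          geH_eval (p := i + 1) (q := i + 1 - 1) (h1 := rfl) (h2 := by omega),
          geH_eval0 (p := i + 1 + 1) (q := i + 1) (h := by omega)]
        simp only [HomologicalComplex.XIsoOfEq_rfl, Iso.refl_hom, Iso.refl_inv,
          Category.id_comp, Category.comp_id, Category.assoc, eqToHom_trans_assoc,
          eqToHom_refl, comp_zero, zero_add, Preadditive.neg_comp, Preadditive.comp_neg,
          HomologicalComplex.XIsoOfEq_inv_comp_d]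
        rw [hsd]
        have ht : (biprod.snd - biprod.fst ≫ t) ≫ (biprod.inr : W ⟶ Z ⊞ W) =
            𝟙 (Z ⊞ W) - biprod.fst ≫ biprod.lift (𝟙 Z) t := by
          apply biprod.hom_ext <;> simp
        rw [reassoc_of% ht]
        simp [Preadditive.sub_comp, Preadditive.comp_sub]
        abel
      · rw [gfF_eval3 (h1 := h1) (h2 := h2), ggF_eval3 (h1 := h1) (h2 := h2),
          geH_eval0 (p := j + 1) (q := j) (h := by omega),
          geH_eval0 (p := j) (q := j - 1) (h := by omega)]
        simp

/-- The homotopy equivalence. -/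
noncomputable def geHomotopyEquiv
    (hιπ : ι ≫ π = 𝟙 Y)
    (hsd : s ≫ Kc.d i (i + 1) = biprod.lift (𝟙 Z) t ≫ eZW.inv) :
    HomotopyEquiv Kc (geL Kc i Z W Y eZW b ι π a s hdb hda hπι hιd) where
  hom := gf Kc i Z W Y eZW b ι π a s t hdb hda hπι hιd hd hπb hWd
  inv := gg Kc i Z W Y eZW b ι π a s t hdb hda hπι hιd hd hπb hWd
  homotopyHomInvId := geHomotopy Kc i Z W Y eZW b ι π a s t hdb hda hπι hιd hd hπb hWd hsd
  homotopyInvHomId := Homotopy.ofEq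
    (gg_comp_gf Kc i Z W Y eZW b ι π a s t hdb hda hπι hιd hd hπb hWd hιπ)

end Maps

end

end GaussElim

open GaussElim in
/-- Let `C` be an additive idempotent-complete category and `K` a
cochain complex whose `(i+1)`-st term is decomposed as `Z ⊞ W`, with the component
`a : K^i ⟶ Z` of the differential a split surjection.  Then `K` is homotopy equivalent to
a complex agreeing with `K` outside degrees `i, i+1`, with objects `Y` and `W` in degrees
`i` and `i+1`, for some object `Y` with `K^i ≅ Y ⊞ Z`. -/
theorem gaussian_elimination_split_epi
    {C : Type*} [Category C] [Preadditive C] [HasBinaryBiproducts C] [IsIdempotentComplete C]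
    (Kc : CochainComplex C ℤ) (i : ℤ) (Z W : C)
    (eZW : Kc.X (i + 1) ≅ Z ⊞ W)
    (ha : IsSplitEpi (Kc.d i (i + 1) ≫ eZW.hom ≫ biprod.fst)) :
    ∃ (Y : C) (L : CochainComplex C ℤ),
      Nonempty (Kc.X i ≅ Y ⊞ Z) ∧
      Nonempty (HomotopyEquiv Kc L) ∧
      Nonempty (L.X i ≅ Y) ∧ Nonempty (L.X (i + 1) ≅ W) ∧
      (∀ j : ℤ, j ≠ i → j ≠ i + 1 → Nonempty (L.X j ≅ Kc.X j)) := by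
  obtain ⟨sp⟩ := ha.exists_splitEpi
  set s := sp.section_ with hs_def
  have hs : s ≫ Kc.d i (i + 1) ≫ eZW.hom ≫ biprod.fst = 𝟙 Z := sp.id
  -- the idempotent
  have hidem : (𝟙 (Kc.X i) - (Kc.d i (i + 1) ≫ eZW.hom ≫ biprod.fst) ≫ s) ≫
      (𝟙 (Kc.X i) - (Kc.d i (i + 1) ≫ eZW.hom ≫ biprod.fst) ≫ s) =
      𝟙 (Kc.X i) - (Kc.d i (i + 1) ≫ eZW.hom ≫ biprod.fst) ≫ s := by
    simp only [Preadditive.sub_comp, Preadditive.comp_sub, Category.id_comp,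
      Category.comp_id, Category.assoc, reassoc_of% hs]
    abel
  obtain ⟨Y, ι, π, hιπ, hπι⟩ :=
    IsIdempotentComplete.idempotents_split (Kc.X i) _ hidem
  -- abbreviations
  have hd : Kc.d i (i + 1) ≫ eZW.hom =
      biprod.lift (Kc.d i (i + 1) ≫ eZW.hom ≫ biprod.fst)
        (Kc.d i (i + 1) ≫ eZW.hom ≫ biprod.snd) := by
    apply biprod.hom_ext <;> simp
  have hιa : ι ≫ Kc.d i (i + 1) ≫ eZW.hom ≫ biprod.fst = 0 := by
    have h2 : ι ≫ (𝟙 (Kc.X i) - (Kc.d i (i + 1) ≫ eZW.hom ≫ biprod.fst) ≫ s) = ι := by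
      rw [← hπι, ← Category.assoc, hιπ, Category.id_comp]
    have h1 : ι ≫ (Kc.d i (i + 1) ≫ eZW.hom ≫ biprod.fst) ≫ s = 0 := by
      simpa [Preadditive.comp_sub, sub_eq_self] using h2
    have h3 := h1 =≫ (Kc.d i (i + 1) ≫ eZW.hom ≫ biprod.fst)
    simpa [Category.assoc, hs] using h3
  have hsπ : s ≫ π = 0 := by
    have h2 : (𝟙 (Kc.X i) - (Kc.d i (i + 1) ≫ eZW.hom ≫ biprod.fst) ≫ s) ≫ π = π := by
      rw [← hπι, Category.assoc, hιπ, Category.comp_id]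
    have h3 : (Kc.d i (i + 1) ≫ eZW.hom ≫ biprod.fst) ≫ s ≫ π = 0 := by
      simpa [Preadditive.sub_comp, sub_eq_self, Category.assoc] using h2
    have h4 := s ≫= h3
    simpa [reassoc_of% hs] using h4
  have hdb : Kc.d (i - 1) i ≫ Kc.d i (i + 1) ≫ eZW.hom ≫ biprod.snd = 0 := by simp
  have hda : Kc.d (i - 1) i ≫ Kc.d i (i + 1) ≫ eZW.hom ≫ biprod.fst = 0 := by simp
  have hιd : ι ≫ Kc.d i (i + 1) =
      (ι ≫ Kc.d i (i + 1) ≫ eZW.hom ≫ biprod.snd) ≫ biprod.inr ≫ eZW.inv := by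
    have h5 : ι ≫ Kc.d i (i + 1) ≫ eZW.hom =
        (ι ≫ Kc.d i (i + 1) ≫ eZW.hom ≫ biprod.snd) ≫ biprod.inr := by
      apply biprod.hom_ext
      · simpa using hιa
      · simp
    have h6 := h5 =≫ eZW.inv
    simpa using h6
  have hπb : π ≫ ι ≫ Kc.d i (i + 1) ≫ eZW.hom ≫ biprod.snd =
      Kc.d i (i + 1) ≫ eZW.hom ≫ biprod.snd -
        (Kc.d i (i + 1) ≫ eZW.hom ≫ biprod.fst) ≫
          s ≫ Kc.d i (i + 1) ≫ eZW.hom ≫ biprod.snd := by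
    rw [← Category.assoc, hπι]
    simp [Preadditive.sub_comp]
  have hsd : s ≫ Kc.d i (i + 1) =
      biprod.lift (𝟙 Z) (s ≫ Kc.d i (i + 1) ≫ eZW.hom ≫ biprod.snd) ≫ eZW.inv := by
    have h7 : s ≫ Kc.d i (i + 1) ≫ eZW.hom =
        biprod.lift (𝟙 Z) (s ≫ Kc.d i (i + 1) ≫ eZW.hom ≫ biprod.snd) := by
      apply biprod.hom_ext
      · simpa using hs
      · simp
    have h8 := h7 =≫ eZW.inv
    simpa using h8
  have hWd : biprod.lift (𝟙 Z) (s ≫ Kc.d i (i + 1) ≫ eZW.hom ≫ biprod.snd) ≫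
      eZW.inv ≫ Kc.d (i + 1) (i + 1 + 1) = 0 := by
    rw [← reassoc_of% hsd]
    simp
  refine ⟨Y, geL Kc i Z W Y eZW (Kc.d i (i + 1) ≫ eZW.hom ≫ biprod.snd) ι π
      (Kc.d i (i + 1) ≫ eZW.hom ≫ biprod.fst) s hdb hda hπι hιd,
    ⟨⟨biprod.lift π (Kc.d i (i + 1) ≫ eZW.hom ≫ biprod.fst), biprod.desc ι s, ?_, ?_⟩⟩,
    ⟨geHomotopyEquiv Kc i Z W Y eZW (Kc.d i (i + 1) ≫ eZW.hom ≫ biprod.snd) ι π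
      (Kc.d i (i + 1) ≫ eZW.hom ≫ biprod.fst) s
      (s ≫ Kc.d i (i + 1) ≫ eZW.hom ≫ biprod.snd)
      hdb hda hπι hιd hd hπb hWd hιπ hsd⟩,
    ⟨eqToIso (geX_eq_Y Kc i W Y rfl)⟩, ⟨eqToIso (geX_eq_W Kc i W Y rfl)⟩,
    fun j h1 h2 => ⟨eqToIso (geX_eq Kc i W Y h1 h2)⟩⟩
  · rw [biprod.lift_desc, hπι]
    abel
  · apply biprod.hom_ext' <;> apply biprod.hom_ext <;>
      simp [hιπ, hιa, hsπ, hs]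
end

section
/- For integers k, ℓ, r ≥ 0 with n = k + ℓ + r, the multiplication map P_n^{S_{k+ℓ} × S_r} ⊗ P_n^{S_k × S_{ℓ+r}} → P_n^{S_k × S_ℓ × S_r} is surjective, where P_n = K[x_1,…,x_n] and superscripts denote invariants under the indicated Young subgroups of the symmetric group S_n permuting the variables. -/
open MvPolynomial

/-- A permutation `σ` of `Fin n` lies in the Young subgroup determined by the composition
whose block boundaries are the thresholds in `T` iff it preserves each initial segment
`{i | i.val < t}` for `t ∈ T`. -/
def InYoung {n : ℕ} (T : Set ℕ) (σ : Equiv.Perm (Fin n)) : Prop :=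
  ∀ t ∈ T, ∀ i : Fin n, (σ i).val < t ↔ i.val < t

/-- The set of polynomials invariant under the Young subgroup with thresholds `T`. -/
def YoungInv (K : Type) [Field K] {n : ℕ} (T : Set ℕ) : Set (MvPolynomial (Fin n) K) :=
  {P | ∀ σ : Equiv.Perm (Fin n), InYoung T σ → rename σ P = P}

section Phi
variable (R : Type) [CommRing R] (σ τ : Type)
noncomputable def PhiAux : MvPolynomial (σ ⊕ τ) R ≃ₐ[R] MvPolynomial τ (MvPolynomial σ R) :=
  (renameEquiv R (Equiv.sumComm σ τ)).trans (sumAlgEquiv R τ σ)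
variable {R σ τ}
lemma PhiAux_X_inl (a : σ) : PhiAux R σ τ (X (Sum.inl a)) = C (X a) := by
  simp [PhiAux, sumAlgEquiv_X_inr]
lemma PhiAux_X_inr (b : τ) : PhiAux R σ τ (X (Sum.inr b)) = X b := by
  simp [PhiAux, sumAlgEquiv_X_inl]
lemma PhiAux_rename_inl (u : MvPolynomial σ R) :
    PhiAux R σ τ (rename Sum.inl u) = C u := by
  have h : ((PhiAux R σ τ : MvPolynomial (σ⊕τ) R →ₐ[R] _).comp (rename Sum.inl))
      = (IsScalarTower.toAlgHom R (MvPolynomial σ R) (MvPolynomial τ (MvPolynomial σ R))) := by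
    apply algHom_ext
    intro i
    simpa [PhiAux_X_inl] using rfl
  exact DFunLike.congr_fun h u
lemma PhiAux_rename_inr (v : MvPolynomial τ R) :
    PhiAux R σ τ (rename Sum.inr v) = map (C : R →+* MvPolynomial σ R) v := by
  have h : ((PhiAux R σ τ : MvPolynomial (σ⊕τ) R →ₐ[R] _).comp (rename Sum.inr))
      = (mapAlgHom (Algebra.ofId R (MvPolynomial σ R)) : MvPolynomial τ R →ₐ[R] _) := by
    apply algHom_ext
    intro i
    simp [PhiAux_X_inr, mapAlgHom_apply]
  have := DFunLike.congr_fun h v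
  simpa [mapAlgHom_apply, Algebra.ofId] using this
lemma PhiAux_rename_right (e : Equiv.Perm τ) (P : MvPolynomial (σ ⊕ τ) R) :
    rename e (PhiAux R σ τ P) = PhiAux R σ τ (rename (Equiv.sumCongr (Equiv.refl σ) e) P) := by
  have h : (((rename (e : τ → τ) :
        MvPolynomial τ (MvPolynomial σ R) →ₐ[MvPolynomial σ R] _).restrictScalars R).comp
        ((PhiAux R σ τ : MvPolynomial (σ⊕τ) R →ₐ[R] _)))
      = (PhiAux R σ τ : MvPolynomial (σ⊕τ) R →ₐ[R] _).comp
        (rename (Equiv.sumCongr (Equiv.refl σ) e)) := by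
    apply algHom_ext
    rintro (a | b) <;> simp [PhiAux_X_inl, PhiAux_X_inr]
  exact DFunLike.congr_fun h P
lemma PhiAux_rename_left (e : Equiv.Perm σ) (P : MvPolynomial (σ ⊕ τ) R) :
    map ((rename (e : σ → σ)).toRingHom : MvPolynomial σ R →+* MvPolynomial σ R) (PhiAux R σ τ P)
      = PhiAux R σ τ (rename (Equiv.sumCongr e (Equiv.refl τ)) P) := by
  have h : ((mapAlgHom (rename (e : σ → σ)) : MvPolynomial τ (MvPolynomial σ R) →ₐ[R] _).comp
        ((PhiAux R σ τ : MvPolynomial (σ⊕τ) R →ₐ[R] _)))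
      = (PhiAux R σ τ : MvPolynomial (σ⊕τ) R →ₐ[R] _).comp
        (rename (Equiv.sumCongr e (Equiv.refl τ))) := by
    apply algHom_ext
    rintro (a | b) <;> simp [PhiAux_X_inl, PhiAux_X_inr, mapAlgHom_apply]
  have := DFunLike.congr_fun h P
  simpa [mapAlgHom_apply] using this
end Phi

section Stage
variable {R : Type} [CommRing R] {σ τ : Type} [Fintype τ]

lemma map_aeval_esymm (f : MvPolynomial σ R →+* MvPolynomial σ R)
    (W : MvPolynomial (Fin (Fintype.card τ)) (MvPolynomial σ R)) :
    map f (aeval (fun i : Fin (Fintype.card τ) => esymm τ (MvPolynomial σ R) (i + 1)) W)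
      = aeval (fun i : Fin (Fintype.card τ) => esymm τ (MvPolynomial σ R) (i + 1)) (map f W) := by
  induction W using MvPolynomial.induction_on with
  | C a => rw [aeval_C, map_C, aeval_C]; exact (map_C f a)
  | add p q hp hq => simp only [map_add, hp, hq]
  | mul_X p i hp => simp only [map_mul, aeval_X, map_X, hp, map_esymm]

/-- Key structural lemma: a polynomial on `σ ⊕ τ` invariant under all permutations of `τ`
decomposes as a sum of products of a polynomial in the `σ`-variables (inheriting all
invariances of `P` on the `σ` side) and a symmetric polynomial in the `τ`-variables. -/
lemma stage_decomposition (P : MvPolynomial (σ ⊕ τ) R)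
    (hP : ∀ e : Equiv.Perm τ, rename (Equiv.sumCongr (Equiv.refl σ) e) P = P) :
    ∃ (s : Finset ((Fin (Fintype.card τ)) →₀ ℕ))
      (u : ((Fin (Fintype.card τ)) →₀ ℕ) → MvPolynomial σ R)
      (v : ((Fin (Fintype.card τ)) →₀ ℕ) → MvPolynomial τ R),
      (∀ d, (v d).IsSymmetric) ∧
      (∀ d, ∀ e : Equiv.Perm σ, rename (Equiv.sumCongr e (Equiv.refl τ)) P = P →
        rename e (u d) = u d) ∧
      P = ∑ d ∈ s, rename Sum.inl (u d) * rename Sum.inr (v d) := by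
  classical
  set R' := MvPolynomial σ R with hR'
  set N := Fintype.card τ with hN
  have hsym : (PhiAux R σ τ P).IsSymmetric := by
    intro e
    rw [PhiAux_rename_right e P, hP e]
  obtain ⟨W, hW⟩ := esymmAlgHom_surjective (σ := τ) R' (n := N) le_rfl ⟨PhiAux R σ τ P, hsym⟩
  have hWval : aeval (fun i : Fin N => esymm τ R' (i+1)) W = PhiAux R σ τ P := by
    have := congrArg Subtype.val hW
    rwa [esymmAlgHom_apply] at this
  refine ⟨W.support, fun d => coeff d W,
    fun d => d.prod (fun i e => esymm τ R (i+1) ^ e), ?_, ?_, ?_⟩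
  · intro d
    rw [← mem_symmetricSubalgebra]
    unfold Finsupp.prod
    exact Subalgebra.prod_mem _ (fun i _ => pow_mem ((mem_symmetricSubalgebra _).2
      (esymm_isSymmetric τ R (i+1))) _)
  · intro d e he
    have h1 : map ((rename (e : σ → σ)).toRingHom : R' →+* R') (PhiAux R σ τ P)
        = PhiAux R σ τ P := by
      rw [PhiAux_rename_left, he]
    have h2 : (esymmAlgHom τ R' N) (map ((rename (e : σ → σ)).toRingHom : R' →+* R') W)
        = (esymmAlgHom τ R' N) W := by
      apply Subtype.ext
      rw [esymmAlgHom_apply, esymmAlgHom_apply, ← map_aeval_esymm, hWval, h1]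
    have h3 := esymmAlgHom_injective (σ := τ) R' (n := N) le_rfl h2
    have := congrArg (coeff d) h3
    rwa [coeff_map] at this
  · apply (PhiAux R σ τ).injective
    rw [← hWval]
    conv_lhs => rw [W.as_sum]
    rw [map_sum, map_sum]
    refine Finset.sum_congr rfl (fun d _ => ?_)
    rw [map_mul, PhiAux_rename_inl, PhiAux_rename_inr, aeval_monomial, algebraMap_eq]
    congr 1
    unfold Finsupp.prod
    rw [map_prod]
    exact Finset.prod_congr rfl fun i _ => by rw [map_pow, map_esymm]
end Stage

section E
variable {R : Type} [CommRing R] {α β : Type} [DecidableEq α] [DecidableEq β]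

/-- The elementary symmetric polynomial of degree `j` in the variables belonging to the
finite set `S`, defined as a coefficient of `∏ i in S, (1 + X i * t)`. -/
noncomputable def Esym (R : Type) [CommRing R] {α : Type} (S : Finset α) (j : ℕ) :
    MvPolynomial α R :=
  (∏ i ∈ S, (Polynomial.C (X i) * Polynomial.X + 1)).coeff j

omit [DecidableEq α] in
lemma Esym_zero (S : Finset α) : Esym R S 0 = 1 := by
  unfold Esym
  rw [Polynomial.coeff_zero_eq_eval_zero, Polynomial.eval_prod]
  simp

lemma Esym_union {S T : Finset α} (h : Disjoint S T) (j : ℕ) :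
    Esym R (S ∪ T) j = ∑ p ∈ Finset.HasAntidiagonal.antidiagonal j, Esym R S p.1 * Esym R T p.2 := by
  unfold Esym
  rw [Finset.prod_union h, Polynomial.coeff_mul]

omit [DecidableEq α] in
lemma rename_Esym (g : α → β) (hg : Function.Injective g) (S : Finset α) (j : ℕ) :
    rename g (Esym R S j) = Esym R (S.image g) j := by
  unfold Esym
  have h1 : (rename g) ((∏ i ∈ S, (Polynomial.C (X i) * Polynomial.X + 1) :
        Polynomial (MvPolynomial α R)).coeff j)
      = (Polynomial.map ((rename g).toRingHom)
        (∏ i ∈ S, (Polynomial.C (X i) * Polynomial.X + 1))).coeff j :=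
    (Polynomial.coeff_map _ _).symm
  rw [h1, Polynomial.map_prod, Finset.prod_image (fun a _ b _ h => hg h)]
  congr 1
  refine Finset.prod_congr rfl (fun i _ => ?_)
  simp

omit [DecidableEq α] in
lemma esymm_eq_Esym [Fintype α] (j : ℕ) :
    esymm α R j = Esym R Finset.univ j := by
  classical
  unfold Esym
  rw [Finset.prod_add]
  have h1 : ∀ t : Finset α, ((∏ i ∈ t, Polynomial.C (X i : MvPolynomial α R) * Polynomial.X) *
      ∏ _i ∈ Finset.univ \ t, (1 : Polynomial (MvPolynomial α R)))
      = Polynomial.C (∏ i ∈ t, (X i : MvPolynomial α R)) * Polynomial.X ^ t.card := by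
    intro t
    rw [Finset.prod_const_one, mul_one, Finset.prod_mul_distrib, map_prod,
      Finset.prod_const]
  rw [Finset.sum_congr rfl (fun t _ => h1 t), Polynomial.finset_sum_coeff]
  have h2 : ∀ t : Finset α, (Polynomial.C (∏ i ∈ t, (X i : MvPolynomial α R)) *
      Polynomial.X ^ t.card).coeff j
      = if t.card = j then ∏ i ∈ t, (X i : MvPolynomial α R) else 0 := by
    intro t
    rw [Polynomial.coeff_C_mul, Polynomial.coeff_X_pow]
    rcases eq_or_ne t.card j with h | h
    · simp [h]
    · rw [if_neg h, if_neg (Ne.symm h), mul_zero]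
  rw [Finset.sum_congr rfl (fun t _ => h2 t), Finset.sum_ite, Finset.sum_const_zero, add_zero,
    esymm, Finset.powersetCard_eq_filter]
end E

section YoungAux
variable {K : Type} [Field K] {n : ℕ}

lemma youngInv_one (T : Set ℕ) : (1 : MvPolynomial (Fin n) K) ∈ YoungInv K T :=
  fun σ _ => map_one (rename (σ : Fin n → Fin n))

lemma youngInv_mul {T : Set ℕ} {f g : MvPolynomial (Fin n) K}
    (hf : f ∈ YoungInv K T) (hg : g ∈ YoungInv K T) : f * g ∈ YoungInv K T := by
  intro σ hσ
  rw [map_mul, hf σ hσ, hg σ hσ]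

lemma transfer_invariance {α : Type} (E : α ≃ Fin n) {T : Set ℕ} {P : MvPolynomial (Fin n) K}
    (hP : P ∈ YoungInv K T) (π : Equiv.Perm α)
    (h : InYoung T (E.symm.trans (π.trans E))) :
    rename π (rename (E.symm : Fin n → α) P) = rename (E.symm : Fin n → α) P := by
  rw [rename_rename]
  have hc : (π : α → α) ∘ (E.symm : Fin n → α)
      = (E.symm : Fin n → α) ∘ ((E.symm.trans (π.trans E)) : Fin n → Fin n) := by
    funext x; simp
  rw [hc, ← rename_rename, hP _ h]

lemma push_invariant {m : ℕ} (g : Fin m → Fin n) (hg : Function.Injective g) (T : Set ℕ)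
    (hstab : ∀ σ : Equiv.Perm (Fin n), InYoung T σ → ∀ x : Fin m, ∃ y : Fin m, g y = σ (g x))
    {v : MvPolynomial (Fin m) K} (hv : v.IsSymmetric) :
    rename g v ∈ YoungInv K T := by
  intro σ hσ
  choose f hf using hstab σ hσ
  have hfi : Function.Injective f := by
    intro x x' hxx
    apply hg
    apply σ.injective
    rw [← hf, ← hf, hxx]
  have hbj : Function.Bijective f := Finite.injective_iff_bijective.mp hfi
  have hcomp : (σ : Fin n → Fin n) ∘ g = g ∘ (Equiv.ofBijective f hbj : Fin m → Fin m) := by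
    funext x; exact (hf x).symm
  rw [rename_rename, hcomp, ← rename_rename, hv (Equiv.ofBijective f hbj)]

lemma aeval_mem_subalgebra {ι : Type} (Sub : Subalgebra K (MvPolynomial (Fin n) K))
    (f : ι → MvPolynomial (Fin n) K) (hf : ∀ i, f i ∈ Sub) (w : MvPolynomial ι K) :
    aeval f w ∈ Sub := by
  induction w using MvPolynomial.induction_on with
  | C a => rw [aeval_C]; exact Sub.algebraMap_mem a
  | add p q hp hq => rw [map_add]; exact add_mem hp hq
  | mul_X p i hp => rw [map_mul, aeval_X]; exact mul_mem hp (hf i)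

end YoungAux

/-- For `n = k + ℓ + r`, the multiplication map
`P_n^{S_{k+ℓ} × S_r} ⊗ P_n^{S_k × S_{ℓ+r}} → P_n^{S_k × S_ℓ × S_r}` is surjective:
every polynomial invariant under `S_k × S_ℓ × S_r` is a `K`-linear combination of
products `f * g` with `f` invariant under `S_{k+ℓ} × S_r` and `g` invariant under
`S_k × S_{ℓ+r}`. -/
theorem young_invariants_multiplication_surjective
    (K : Type) [Field K] (k ℓ r : ℕ) (n : ℕ) (hn : n = k + ℓ + r)
    (P : MvPolynomial (Fin n) K) (hP : P ∈ YoungInv K {k, k + ℓ}) :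
    P ∈ Submodule.span K
      {z : MvPolynomial (Fin n) K | ∃ f g, f ∈ YoungInv K {k + ℓ} ∧
        g ∈ YoungInv K {k} ∧ z = f * g} := by
  classical
  set gen : Set (MvPolynomial (Fin n) K) :=
    {z : MvPolynomial (Fin n) K | ∃ f g, f ∈ YoungInv K {k + ℓ} ∧
      g ∈ YoungInv K {k} ∧ z = f * g} with hgen
  set MS : Submodule K (MvPolynomial (Fin n) K) := Submodule.span K gen with hMS
  -- MS is closed under multiplication and contains 1
  have hgenmul : ∀ x ∈ gen, ∀ y ∈ gen, x * y ∈ gen := by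
    rintro x ⟨f1, g1, hf1, hg1, rfl⟩ y ⟨f2, g2, hf2, hg2, rfl⟩
    exact ⟨f1 * f2, g1 * g2, youngInv_mul hf1 hf2, youngInv_mul hg1 hg2, by ring⟩
  have hMSmul : ∀ x y : MvPolynomial (Fin n) K, x ∈ MS → y ∈ MS → x * y ∈ MS := by
    intro x y hx hy
    have h1 : x * y ∈ MS * MS := Submodule.mul_mem_mul hx hy
    rw [hMS, Submodule.span_mul_span] at h1
    refine Submodule.span_le.mpr ?_ h1
    rintro z ⟨a, ha, b, hb, rfl⟩
    exact Submodule.subset_span (hgenmul a ha b hb)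
  have hMSone : (1 : MvPolynomial (Fin n) K) ∈ MS :=
    Submodule.subset_span ⟨1, 1, youngInv_one _, youngInv_one _, (mul_one 1).symm⟩
  set Msub : Subalgebra K (MvPolynomial (Fin n) K) := MS.toSubalgebra hMSone hMSmul with hMsub
  have hMsubMS : ∀ x : MvPolynomial (Fin n) K, x ∈ Msub ↔ x ∈ MS := fun _ => Iff.rfl
  have hfMS : ∀ f ∈ YoungInv K ({k + ℓ} : Set ℕ), f ∈ MS := fun f hf =>
    Submodule.subset_span ⟨f, 1, hf, youngInv_one _, (mul_one f).symm⟩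
  have hgMS : ∀ g ∈ YoungInv K ({k} : Set ℕ), g ∈ MS := fun g hg =>
    Submodule.subset_span ⟨1, g, youngInv_one _, hg, (one_mul g).symm⟩
  -- blocks
  set Af : Finset (Fin n) := Finset.filter (fun i : Fin n => (i : ℕ) < k) Finset.univ with hAf
  set Bf : Finset (Fin n) :=
    Finset.filter (fun i : Fin n => k ≤ (i : ℕ) ∧ (i : ℕ) < k + ℓ) Finset.univ with hBf
  set ABf : Finset (Fin n) := Finset.filter (fun i : Fin n => (i : ℕ) < k + ℓ) Finset.univ
    with hABf
  have hdisj : Disjoint Af Bf := by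
    rw [Finset.disjoint_left]
    intro i hi hi'
    rw [hAf, Finset.mem_filter] at hi
    rw [hBf, Finset.mem_filter] at hi'
    omega
  have hABun : Af ∪ Bf = ABf := by
    ext i
    simp only [hAf, hBf, hABf, Finset.mem_union, Finset.mem_filter, Finset.mem_univ, true_and]
    omega
  -- block embeddings
  set gA : Fin k → Fin n := fun a => ⟨a.val, by have := a.isLt; omega⟩ with hgA
  set gB : Fin ℓ → Fin n := fun b => ⟨k + b.val, by have := b.isLt; omega⟩ with hgB
  set gC : Fin r → Fin n := fun c => ⟨k + ℓ + c.val, by have := c.isLt; omega⟩ with hgC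
  have hgAinj : Function.Injective gA := by
    intro x y hxy
    have := congrArg Fin.val hxy
    simp only [hgA] at this
    exact Fin.ext this
  have hgBinj : Function.Injective gB := by
    intro x y hxy
    have := congrArg Fin.val hxy
    simp only [hgB] at this
    exact Fin.ext (by omega)
  have himgB : Finset.image gB Finset.univ = Bf := by
    ext i
    simp only [Finset.mem_image, Finset.mem_univ, true_and, hBf, Finset.mem_filter]
    constructor
    · rintro ⟨b, rfl⟩
      have := b.isLt
      simp only [hgB]
      omega
    · rintro ⟨h1, h2⟩
      refine ⟨⟨(i : ℕ) - k, by omega⟩, ?_⟩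
      apply Fin.ext
      simp only [hgB]
      omega
  -- invariance of the block esymms
  have hEA : ∀ j, Esym K Af j ∈ YoungInv K ({k} : Set ℕ) := by
    intro j σ hσ
    have himg : Af.image (σ : Fin n → Fin n) = Af := by
      apply Finset.eq_of_subset_of_card_le
      · intro i hi
        rw [Finset.mem_image] at hi
        obtain ⟨a, ha, rfl⟩ := hi
        rw [hAf, Finset.mem_filter] at ha ⊢
        exact ⟨Finset.mem_univ _, (hσ k rfl a).mpr ha.2⟩
      · rw [Finset.card_image_of_injective _ σ.injective]
    rw [rename_Esym _ σ.injective, himg]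
  have hEAB : ∀ j, Esym K ABf j ∈ YoungInv K ({k + ℓ} : Set ℕ) := by
    intro j σ hσ
    have himg : ABf.image (σ : Fin n → Fin n) = ABf := by
      apply Finset.eq_of_subset_of_card_le
      · intro i hi
        rw [Finset.mem_image] at hi
        obtain ⟨a, ha, rfl⟩ := hi
        rw [hABf, Finset.mem_filter] at ha ⊢
        exact ⟨Finset.mem_univ _, (hσ (k + ℓ) rfl a).mpr ha.2⟩
      · rw [Finset.card_image_of_injective _ σ.injective]
    rw [rename_Esym _ σ.injective, himg]
  -- the B-block esymms are in the span
  have hEB : ∀ j, Esym K Bf j ∈ MS := by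
    intro j
    induction j using Nat.strong_induction_on with
    | _ j ih =>
      have hconv := Esym_union (R := K) hdisj j
      rw [hABun] at hconv
      have hzj : ((0 : ℕ), j) ∈ Finset.HasAntidiagonal.antidiagonal j := by
        rw [Finset.HasAntidiagonal.mem_antidiagonal]; omega
      rw [← Finset.sum_erase_add _ _ hzj, Esym_zero, one_mul] at hconv
      have heq : Esym K Bf j = Esym K ABf j
          - ∑ p ∈ (Finset.HasAntidiagonal.antidiagonal j).erase (0, j), Esym K Af p.1 * Esym K Bf p.2 := by
        rw [hconv]; ring
      rw [heq]
      refine sub_mem (hfMS _ (hEAB j)) (Submodule.sum_mem _ ?_)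
      intro p hp
      have hpd := Finset.HasAntidiagonal.mem_antidiagonal.mp (Finset.mem_of_mem_erase hp)
      have hpne := Finset.ne_of_mem_erase hp
      have hlt : p.2 < j := by
        by_contra hcon
        push_neg at hcon
        have h1 : p.1 = 0 := by omega
        have h2 : p.2 = j := by omega
        exact hpne (Prod.ext h1 h2)
      exact hMSmul _ _ (hgMS _ (hEA p.1)) (ih p.2 hlt)
  -- symmetric polynomials in the B block are in the span
  have hBmem : ∀ b : MvPolynomial (Fin ℓ) K, b.IsSymmetric → rename gB b ∈ MS := by
    intro b hb
    obtain ⟨w, hw⟩ := esymmAlgHom_surjective (σ := Fin ℓ) K (n := ℓ) (by simp) ⟨b, hb⟩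
    have hwv : aeval (fun i : Fin ℓ => esymm (Fin ℓ) K (i + 1)) w = b := by
      have := congrArg Subtype.val hw
      rwa [esymmAlgHom_apply] at this
    have hcomp := DFunLike.congr_fun
      (comp_aeval (fun i : Fin ℓ => esymm (Fin ℓ) K ((i : ℕ) + 1))
        (rename gB : MvPolynomial (Fin ℓ) K →ₐ[K] MvPolynomial (Fin n) K)) w
    rw [AlgHom.comp_apply] at hcomp
    rw [← hwv, hcomp]
    refine aeval_mem_subalgebra Msub _ (fun i => ?_) w
    rw [hMsubMS, esymm_eq_Esym, rename_Esym gB hgBinj, himgB]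
    exact hEB _
  -- the two transport equivalences
  set e1 : (Fin (k + ℓ) ⊕ Fin r) ≃ Fin n := finSumFinEquiv.trans (finCongr hn.symm) with he1
  set e2 : (Fin k ⊕ Fin ℓ) ≃ Fin (k + ℓ) := finSumFinEquiv with he2
  have he1l : ∀ a : Fin (k + ℓ), (e1 (Sum.inl a) : ℕ) = a := by
    intro a; simp [he1]
  have he1r : ∀ b : Fin r, (e1 (Sum.inr b) : ℕ) = k + ℓ + b := by
    intro b; simp [he1]
  have he2l : ∀ a : Fin k, (e2 (Sum.inl a) : ℕ) = a := by
    intro a; simp [he2]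
  have he2r : ∀ b : Fin ℓ, (e2 (Sum.inr b) : ℕ) = k + b := by
    intro b; simp [he2]
  have hgCinj : Function.Injective gC := by
    intro x y hxy
    have := congrArg Fin.val hxy
    simp only [hgC] at this
    exact Fin.ext (by omega)
  -- conjugation facts
  have hT : ∀ t ∈ ({k, k + ℓ} : Set ℕ), t = k ∨ t = k + ℓ := by
    intro t ht; simpa using ht
  have hconj1 : ∀ e : Equiv.Perm (Fin r),
      InYoung {k, k + ℓ}
        (e1.symm.trans ((Equiv.sumCongr (Equiv.refl (Fin (k + ℓ))) e).trans e1)) := by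
    intro e t ht i
    have htle : t ≤ k + ℓ := by rcases hT t ht with rfl | rfl <;> omega
    rcases h : e1.symm i with a | b
    · have hi : i = e1 (Sum.inl a) := by rw [← h, Equiv.apply_symm_apply]
      have hv : ((e1.symm.trans ((Equiv.sumCongr (Equiv.refl (Fin (k + ℓ))) e).trans e1)) i)
          = i := by
        rw [Equiv.trans_apply, Equiv.trans_apply, h]
        simp [hi.symm]
      rw [hv]
    · have hi : (i : ℕ) = k + ℓ + b := by
        have h2 : i = e1 (Sum.inr b) := by rw [← h, Equiv.apply_symm_apply]
        rw [h2, he1r]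
      have hv : (((e1.symm.trans ((Equiv.sumCongr (Equiv.refl (Fin (k + ℓ))) e).trans e1)) i)
          : ℕ) = k + ℓ + (e b : ℕ) := by
        rw [Equiv.trans_apply, Equiv.trans_apply, h]
        simp [he1r]
      rw [hv]
      omega
  have hconj2 : ∀ e : Equiv.Perm (Fin (k + ℓ)), InYoung ({k} : Set ℕ) e →
      InYoung {k, k + ℓ}
        (e1.symm.trans ((Equiv.sumCongr e (Equiv.refl (Fin r))).trans e1)) := by
    intro e he t ht i
    rcases h : e1.symm i with a | b
    · have hi : (i : ℕ) = a := by
        have h2 : i = e1 (Sum.inl a) := by rw [← h, Equiv.apply_symm_apply]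
        rw [h2, he1l]
      have hv : (((e1.symm.trans ((Equiv.sumCongr e (Equiv.refl (Fin r))).trans e1)) i) : ℕ)
          = (e a : ℕ) := by
        rw [Equiv.trans_apply, Equiv.trans_apply, h]
        simp [he1l]
      have hiff := he k rfl a
      have h3 := (e a).isLt
      have h4 := a.isLt
      rcases hT t ht with rfl | rfl
      · rw [hv, hi]; exact hiff
      · rw [hv]; omega
    · have hv : ((e1.symm.trans ((Equiv.sumCongr e (Equiv.refl (Fin r))).trans e1)) i) = i := by
        rw [Equiv.trans_apply, Equiv.trans_apply, h]
        have h2 : i = e1 (Sum.inr b) := by rw [← h, Equiv.apply_symm_apply]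
        simp [h2.symm]
      rw [hv]
  have hconj3 : ∀ e : Equiv.Perm (Fin ℓ),
      InYoung ({k} : Set ℕ)
        (e2.symm.trans ((Equiv.sumCongr (Equiv.refl (Fin k)) e).trans e2)) := by
    intro e t ht i
    have ht' : t = k := ht
    rcases h : e2.symm i with a | b
    · have hv : ((e2.symm.trans ((Equiv.sumCongr (Equiv.refl (Fin k)) e).trans e2)) i) = i := by
        rw [Equiv.trans_apply, Equiv.trans_apply, h]
        have h2 : i = e2 (Sum.inl a) := by rw [← h, Equiv.apply_symm_apply]
        simp [h2.symm]
      rw [hv]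
    · have hi : (i : ℕ) = k + b := by
        have h2 : i = e2 (Sum.inr b) := by rw [← h, Equiv.apply_symm_apply]
        rw [h2, he2r]
      have hv : (((e2.symm.trans ((Equiv.sumCongr (Equiv.refl (Fin k)) e).trans e2)) i) : ℕ)
          = k + (e b : ℕ) := by
        rw [Equiv.trans_apply, Equiv.trans_apply, h]
        simp [he2r]
      rw [hv]
      omega
  have hconj4 : ∀ e : Equiv.Perm (Fin k),
      InYoung ({k} : Set ℕ)
        (e2.symm.trans ((Equiv.sumCongr e (Equiv.refl (Fin ℓ))).trans e2)) := by
    intro e t ht i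
    have ht' : t = k := ht
    rcases h : e2.symm i with a | b
    · have hi : (i : ℕ) = a := by
        have h2 : i = e2 (Sum.inl a) := by rw [← h, Equiv.apply_symm_apply]
        rw [h2, he2l]
      have hv : (((e2.symm.trans ((Equiv.sumCongr e (Equiv.refl (Fin ℓ))).trans e2)) i) : ℕ)
          = (e a : ℕ) := by
        rw [Equiv.trans_apply, Equiv.trans_apply, h]
        simp [he2l]
      have h3 := (e a).isLt
      have h4 := a.isLt
      rw [hv]
      omega
    · have hv : ((e2.symm.trans ((Equiv.sumCongr e (Equiv.refl (Fin ℓ))).trans e2)) i) = i := by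
        rw [Equiv.trans_apply, Equiv.trans_apply, h]
        have h2 : i = e2 (Sum.inr b) := by rw [← h, Equiv.apply_symm_apply]
        simp [h2.symm]
      rw [hv]
  -- stabilization facts for the block embeddings
  have hstabA : ∀ σ : Equiv.Perm (Fin n), InYoung ({k} : Set ℕ) σ →
      ∀ x : Fin k, ∃ y : Fin k, gA y = σ (gA x) := by
    intro σ hσ x
    have h1 : (σ (gA x) : ℕ) < k := by
      refine (hσ k rfl (gA x)).mpr ?_
      simp only [hgA]
      exact x.isLt
    exact ⟨⟨(σ (gA x) : ℕ), h1⟩, Fin.ext (by simp [hgA])⟩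
  have hstabC : ∀ σ : Equiv.Perm (Fin n), InYoung ({k + ℓ} : Set ℕ) σ →
      ∀ x : Fin r, ∃ y : Fin r, gC y = σ (gC x) := by
    intro σ hσ x
    have h0 : ¬ ((gC x : ℕ) < k + ℓ) := by
      simp only [hgC]
      omega
    have h1 : ¬ ((σ (gC x) : ℕ) < k + ℓ) := fun hc => h0 ((hσ (k + ℓ) rfl (gC x)).mp hc)
    have h2 := (σ (gC x)).isLt
    refine ⟨⟨(σ (gC x) : ℕ) - (k + ℓ), by omega⟩, Fin.ext ?_⟩
    show k + ℓ + ((σ (gC x) : ℕ) - (k + ℓ)) = (σ (gC x) : ℕ)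
    omega
  -- first stage decomposition
  set P' : MvPolynomial (Fin (k + ℓ) ⊕ Fin r) K := rename (⇑e1.symm) P with hP'def
  have hP'inv : ∀ e : Equiv.Perm (Fin r),
      rename (Equiv.sumCongr (Equiv.refl (Fin (k + ℓ))) e) P' = P' :=
    fun e => transfer_invariance e1 hP _ (hconj1 e)
  obtain ⟨s1, u, v, hvsym, huinv, hdecomp⟩ := stage_decomposition P' hP'inv
  have hudY : ∀ d, u d ∈ YoungInv K ({k} : Set ℕ) := by
    intro d e he
    exact huinv d e (transfer_invariance e1 hP _ (hconj2 e he))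
  have hPsum : P = ∑ d ∈ s1,
      rename ((⇑e1) ∘ Sum.inl) (u d) * rename ((⇑e1) ∘ Sum.inr) (v d) := by
    have h1 : P = rename (⇑e1) P' := by
      rw [hP'def, rename_rename, Equiv.self_comp_symm, rename_id_apply]
    rw [h1, hdecomp, map_sum]
    refine Finset.sum_congr rfl fun d _ => ?_
    rw [map_mul, rename_rename, rename_rename]
  rw [hPsum]
  refine Submodule.sum_mem _ (fun d _ => ?_)
  -- the C factor
  have hfunC : (⇑e1) ∘ Sum.inr = gC := by
    funext c
    apply Fin.ext
    simp only [Function.comp_apply, he1r]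
    rfl
  have hC : rename ((⇑e1) ∘ Sum.inr) (v d) ∈ YoungInv K ({k + ℓ} : Set ℕ) := by
    rw [hfunC]
    exact push_invariant gC hgCinj _ hstabC (hvsym d)
  -- second stage decomposition on `u d`
  obtain ⟨s2, a, b, hbsym, hainv, hdecomp2⟩ := stage_decomposition (rename (⇑e2.symm) (u d))
      (fun e => transfer_invariance e2 (hudY d) _ (hconj3 e))
  have hasym : ∀ j, (a j).IsSymmetric := by
    intro j e
    exact hainv j e (transfer_invariance e2 (hudY d) _ (hconj4 e))
  have hrenA : ∀ p : MvPolynomial (Fin k) K,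
      rename ((⇑e1) ∘ Sum.inl) (rename (⇑e2) (rename Sum.inl p)) = rename gA p := by
    intro p
    rw [rename_rename, rename_rename]
    congr 1
  have hrenB : ∀ p : MvPolynomial (Fin ℓ) K,
      rename ((⇑e1) ∘ Sum.inl) (rename (⇑e2) (rename Sum.inr p)) = rename gB p := by
    intro p
    rw [rename_rename, rename_rename]
    congr 1
  have hufact : rename ((⇑e1) ∘ Sum.inl) (u d)
      = ∑ j ∈ s2, rename gA (a j) * rename gB (b j) := by
    have h1 : u d = rename (⇑e2) (rename (⇑e2.symm) (u d)) := by
      rw [rename_rename, Equiv.self_comp_symm, rename_id_apply]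
    rw [h1, hdecomp2]
    simp only [map_sum, map_mul]
    refine Finset.sum_congr rfl fun j _ => ?_
    rw [hrenA, hrenB]
  rw [hufact, Finset.sum_mul]
  refine Submodule.sum_mem _ (fun j _ => ?_)
  have hA : rename gA (a j) ∈ YoungInv K ({k} : Set ℕ) :=
    push_invariant gA hgAinj _ hstabA (hasym j)
  have hgen1 : rename ((⇑e1) ∘ Sum.inr) (v d) * rename gA (a j) ∈ gen :=
    ⟨_, _, hC, hA, rfl⟩
  have hre : rename gA (a j) * rename gB (b j) * rename ((⇑e1) ∘ Sum.inr) (v d)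
      = (rename ((⇑e1) ∘ Sum.inr) (v d) * rename gA (a j)) * rename gB (b j) := by ring
  rw [hre]
  exact hMSmul _ _ (Submodule.subset_span hgen1) (hBmem (b j) (hbsym j))
end

section
/- In the affine nil Hecke algebra H_n over a field K (generated by commuting x_1,…,x_n and τ_1,…,τ_{n-1} with τ_k² = 0, braid relations, and τ_k x_i − x_{s_k(i)} τ_k = δ_{i,k+1} − δ_{i,k}), the assignment x_k ↦ multiplication by x_k on P_n = K[x_1,…,x_n] and τ_k ↦ the Demazure operator ∂_k(P) = (P − s_k(P))/(x_{k+1} − x_k) defines a well-defined K-algebra homomorphism H_n → End_{P_n^{S_n}}(P_n). -/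
open MvPolynomial

/-- Generators of the affine nil Hecke algebra `H_n`: `x i` for `i : Fin n` and
`t k` for `k : Fin (n-1)` (so `t k` corresponds to `τ_{k+1}` in one-based notation). -/
inductive NHGen (n : ℕ) : Type
  | x : Fin n → NHGen n
  | t : Fin (n - 1) → NHGen n

namespace NHGen

/-- The image in `Fin n` of the smaller index of `t k`. -/
def lo {n : ℕ} (k : Fin (n - 1)) : Fin n := ⟨k.val, by have := k.isLt; omega⟩
/-- The image in `Fin n` of the larger index of `t k`. -/
def hi {n : ℕ} (k : Fin (n - 1)) : Fin n := ⟨k.val + 1, by have := k.isLt; omega⟩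

end NHGen

/-- The defining relations of the affine nil Hecke algebra. -/
inductive NHRel (K : Type) [Field K] (n : ℕ) :
    FreeAlgebra K (NHGen n) → FreeAlgebra K (NHGen n) → Prop
  | xx (i j : Fin n) : NHRel K n
      (FreeAlgebra.ι K (NHGen.x i) * FreeAlgebra.ι K (NHGen.x j))
      (FreeAlgebra.ι K (NHGen.x j) * FreeAlgebra.ι K (NHGen.x i))
  | tsq (k : Fin (n - 1)) : NHRel K n
      (FreeAlgebra.ι K (NHGen.t k) * FreeAlgebra.ι K (NHGen.t k)) 0
  | tx (k : Fin (n - 1)) (i : Fin n) : NHRel K n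
      (FreeAlgebra.ι K (NHGen.t k) * FreeAlgebra.ι K (NHGen.x i) -
        FreeAlgebra.ι K (NHGen.x (Equiv.swap (NHGen.lo k) (NHGen.hi k) i)) *
          FreeAlgebra.ι K (NHGen.t k))
      ((if i = NHGen.hi k then 1 else 0) - (if i = NHGen.lo k then 1 else 0))
  | tt (k l : Fin (n - 1)) (h : k.val + 1 < l.val) : NHRel K n
      (FreeAlgebra.ι K (NHGen.t k) * FreeAlgebra.ι K (NHGen.t l))
      (FreeAlgebra.ι K (NHGen.t l) * FreeAlgebra.ι K (NHGen.t k))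
  | braid (k l : Fin (n - 1)) (h : l.val = k.val + 1) : NHRel K n
      (FreeAlgebra.ι K (NHGen.t l) * FreeAlgebra.ι K (NHGen.t k) * FreeAlgebra.ι K (NHGen.t l))
      (FreeAlgebra.ι K (NHGen.t k) * FreeAlgebra.ι K (NHGen.t l) * FreeAlgebra.ι K (NHGen.t k))

/-- The affine nil Hecke algebra `H_n` over `K`, presented by generators and relations. -/
def NilHecke (K : Type) [Field K] (n : ℕ) : Type := RingQuot (NHRel K n)

noncomputable instance (K : Type) [Field K] (n : ℕ) : Ring (NilHecke K n) :=
  inferInstanceAs (Ring (RingQuot (NHRel K n)))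

noncomputable instance (K : Type) [Field K] (n : ℕ) : Algebra K (NilHecke K n) :=
  inferInstanceAs (Algebra K (RingQuot (NHRel K n)))

/-- The generator `x_{i+1}` of `H_n` (zero-based index `i`). -/
noncomputable def xgen {K : Type} [Field K] {n : ℕ} (i : Fin n) : NilHecke K n :=
  RingQuot.mkAlgHom K (NHRel K n) (FreeAlgebra.ι K (NHGen.x i))

/-- The generator `τ_{k+1}` of `H_n` (zero-based index `k`). -/
noncomputable def tgen {K : Type} [Field K] {n : ℕ} (k : Fin (n - 1)) : NilHecke K n :=
  RingQuot.mkAlgHom K (NHRel K n) (FreeAlgebra.ι K (NHGen.t k))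

namespace NHAux


variable {K : Type} [Field K] {n : ℕ}

local notation "R" => MvPolynomial (Fin n) K

theorem X_sub_ne (a b : Fin n) (h : a ≠ b) : (X b - X a : R) ≠ 0 :=
  sub_ne_zero.mpr fun hh => h (X_injective hh).symm

theorem dcancel {a b : Fin n} (h : a ≠ b) {A B : R}
    (hh : A * (X b - X a) = B * (X b - X a)) : A = B :=
  mul_right_cancel₀ (X_sub_ne a b h) hh

theorem rename_swap_swap (a b : Fin n) (P : R) :
    rename (Equiv.swap a b) (rename (Equiv.swap a b) P) = P := by
  rw [rename_rename]
  have : ⇑(Equiv.swap a b) ∘ ⇑(Equiv.swap a b) = id :=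
    funext fun x => Equiv.swap_apply_self a b x
  rw [this, rename_id, AlgHom.id_apply]

theorem exists_dem (a b : Fin n) (hab : a ≠ b) (P : R) :
    ∃ Q : R, Q * (X b - X a) = P - rename (Equiv.swap a b) P := by
  induction P using MvPolynomial.induction_on with
  | C r => exact ⟨0, by simp⟩
  | add P₁ P₂ h1 h2 =>
    obtain ⟨Q₁, hQ₁⟩ := h1
    obtain ⟨Q₂, hQ₂⟩ := h2
    exact ⟨Q₁ + Q₂, by rw [add_mul, hQ₁, hQ₂, map_add]; ring⟩
  | mul_X P i h =>
    obtain ⟨Q, hQ⟩ := h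
    rcases eq_or_ne i a with hia | hia
    · refine ⟨Q * X i - rename (Equiv.swap a b) P, ?_⟩
      subst hia
      rw [map_mul, rename_X, Equiv.swap_apply_left]
      linear_combination (X i : R) * hQ
    rcases eq_or_ne i b with hib | hib
    · refine ⟨Q * X i + rename (Equiv.swap a b) P, ?_⟩
      subst hib
      rw [map_mul, rename_X, Equiv.swap_apply_right]
      linear_combination (X i : R) * hQ
    · refine ⟨Q * X i, ?_⟩
      rw [map_mul, rename_X, Equiv.swap_apply_of_ne_of_ne hia hib]
      linear_combination (X i : R) * hQ

/-- The Demazure operator as a bare function. -/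
noncomputable def demFun (a b : Fin n) (hab : a ≠ b) (P : R) : R :=
  (exists_dem a b hab P).choose

theorem dem_spec (a b : Fin n) (hab : a ≠ b) (P : R) :
    demFun a b hab P * (X b - X a) = P - rename (Equiv.swap a b) P :=
  (exists_dem a b hab P).choose_spec

/-- The Demazure operator as a `K`-linear map. -/
noncomputable def demL (a b : Fin n) (hab : a ≠ b) : R →ₗ[K] R where
  toFun := demFun a b hab
  map_add' P Q := by
    apply dcancel hab
    rw [add_mul, dem_spec, dem_spec, dem_spec, map_add]; ring
  map_smul' c P := by
    apply dcancel hab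
    rw [RingHom.id_apply, smul_mul_assoc, dem_spec, dem_spec, map_smul, smul_sub]

theorem demL_spec (a b : Fin n) (hab : a ≠ b) (P : R) :
    demL (K := K) a b hab P * (X b - X a) = P - rename (Equiv.swap a b) P :=
  dem_spec a b hab P

theorem rename_demL (σ : Equiv.Perm (Fin n)) (a b : Fin n) (hab : a ≠ b)
    (hab' : σ a ≠ σ b) (P : R) :
    rename σ (demL (K := K) a b hab P) = demL (σ a) (σ b) hab' (rename σ P) := by
  apply dcancel hab'
  rw [demL_spec]
  have hX : (X (σ b) - X (σ a) : R) = rename σ (X b - X a) := by simp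
  rw [hX, ← map_mul, demL_spec, map_sub, rename_rename, rename_rename]
  have hfun : ⇑σ ∘ ⇑(Equiv.swap a b) = ⇑(Equiv.swap (σ a) (σ b)) ∘ ⇑σ := by
    funext x
    simp only [Function.comp_apply, Equiv.swap_apply_apply, Equiv.Perm.mul_apply,
      Equiv.Perm.inv_def, Equiv.symm_apply_apply]
  rw [hfun]

theorem demL_flip (a b : Fin n) (hab : a ≠ b) (P : R) :
    demL (K := K) b a hab.symm P = - demL (K := K) a b hab P := by
  apply dcancel hab
  have l := demL_spec (K := K) b a hab.symm P
  have r := demL_spec (K := K) a b hab P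
  rw [Equiv.swap_comm b a] at l
  linear_combination r - l

theorem demL_invariant_mul (a b : Fin n) (hab : a ≠ b) (m P : R)
    (hm : rename (Equiv.swap a b) m = m) :
    demL (K := K) a b hab (m * P) = m * demL (K := K) a b hab P := by
  apply dcancel hab
  rw [mul_assoc, demL_spec, demL_spec, map_mul, hm, mul_sub]

theorem rename_swap_demL (a b : Fin n) (hab : a ≠ b) (P : R) :
    rename (Equiv.swap a b) (demL (K := K) a b hab P) = demL (K := K) a b hab P := by
  apply dcancel hab
  have h := congrArg (rename (Equiv.swap a b)) (demL_spec a b hab P)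
  rw [map_mul, map_sub, map_sub, rename_X, rename_X, Equiv.swap_apply_left,
    Equiv.swap_apply_right, rename_swap_swap] at h
  rw [demL_spec]
  linear_combination -h

theorem demL_demL (a b : Fin n) (hab : a ≠ b) (P : R) :
    demL (K := K) a b hab (demL (K := K) a b hab P) = 0 := by
  apply dcancel hab
  rw [demL_spec, rename_swap_demL, zero_mul, sub_self]

/-- The braid identity key computation. -/
theorem demL_key (a b c : Fin n) (hab : a ≠ b) (hbc : b ≠ c) (hac : a ≠ c) (P : R) :
    demL (K := K) b c hbc (demL (K := K) a b hab (demL (K := K) b c hbc P)) *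
      ((X b - X a) * (X c - X b) * (X c - X a)) =
    P - rename (Equiv.swap a b) P - rename (Equiv.swap b c) P
      + rename (Equiv.swap a b) (rename (Equiv.swap b c) P)
      + rename (Equiv.swap b c) (rename (Equiv.swap a b) P)
      - rename (Equiv.swap b c) (rename (Equiv.swap a b) (rename (Equiv.swap b c) P)) := by
  set s1 : R →+* R := (rename (Equiv.swap a b) : R →ₐ[K] R).toRingHom with hs1
  set s2 : R →+* R := (rename (Equiv.swap b c) : R →ₐ[K] R).toRingHom with hs2
  set d1 : R := X b - X a
  set d2 : R := X c - X b
  set e : R := X c - X a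
  have hs1X : ∀ i, s1 (X i) = X (Equiv.swap a b i) := fun i => rename_X _ i
  have hs2X : ∀ i, s2 (X i) = X (Equiv.swap b c i) := fun i => rename_X _ i
  have h2d2 : s2 d2 = -d2 := by
    simp only [d2, map_sub, hs2X, Equiv.swap_apply_left, Equiv.swap_apply_right]; ring
  have h1d2 : s1 d2 = e := by
    simp only [d2, e, map_sub, hs1X, Equiv.swap_apply_right,
      Equiv.swap_apply_of_ne_of_ne hac.symm hbc.symm]
  have h2d1 : s2 d1 = e := by
    simp only [d1, e, map_sub, hs2X, Equiv.swap_apply_left,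
      Equiv.swap_apply_of_ne_of_ne hab hac]
  have h2e : s2 e = d1 := by
    simp only [e, d1, map_sub, hs2X, Equiv.swap_apply_right,
      Equiv.swap_apply_of_ne_of_ne hab hac]
  set Q2 : R := demL (K := K) b c hbc P
  set Q12 : R := demL (K := K) a b hab Q2
  set Q212 : R := demL (K := K) b c hbc Q12
  have hQ2 : Q2 * d2 = P - s2 P := demL_spec b c hbc P
  have hQ12 : Q12 * d1 = Q2 - s1 Q2 := demL_spec a b hab Q2
  have hQ212 : Q212 * d2 = Q12 - s2 Q12 := demL_spec b c hbc Q12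
  have hs2Q12 : s2 Q12 * e = s2 Q2 - s2 (s1 Q2) := by
    have h := congrArg s2 hQ12
    rwa [map_mul, h2d1, map_sub] at h
  have hs1Q2 : s1 Q2 * e = s1 P - s1 (s2 P) := by
    have h := congrArg s1 hQ2
    rwa [map_mul, h1d2, map_sub] at h
  have hs2Q2 : s2 Q2 * d2 = P - s2 P := by
    have h := congrArg s2 hQ2
    rw [map_mul, h2d2, map_sub] at h
    have h2 : s2 (s2 P) = P := rename_swap_swap b c P
    rw [h2] at h
    linear_combination -h
  have hs21Q2 : s2 (s1 Q2) * d1 = s2 (s1 P) - s2 (s1 (s2 P)) := by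
    have h := congrArg s2 (congrArg s1 hQ2)
    rwa [map_mul, map_mul, h1d2, h2e, map_sub, map_sub] at h
  have key2 : Q212 * (d1 * d2 * e) * d2
      = (P - s1 P - s2 P + s1 (s2 P) + s2 (s1 P) - s2 (s1 (s2 P))) * d2 := by
    have expand : Q212 * (d1 * d2 * e) * d2
        = ((Q212 * d2) * d1 * e) * d2 := by ring
    rw [expand, hQ212, sub_mul, sub_mul, sub_mul]
    have t1 : Q12 * d1 * e * d2 = (Q2 - s1 Q2) * e * d2 := by rw [hQ12]
    have t2 : s2 Q12 * d1 * e * d2 = (s2 Q2 - s2 (s1 Q2)) * d1 * d2 := by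
      have h : s2 Q12 * d1 * e * d2 = (s2 Q12 * e) * d1 * d2 := by ring
      rw [h, hs2Q12]
    rw [t1, t2]
    have t3 : (Q2 - s1 Q2) * e * d2 = (Q2 * d2) * e - (s1 Q2 * e) * d2 := by ring
    have t4 : (s2 Q2 - s2 (s1 Q2)) * d1 * d2
        = (s2 Q2 * d2) * d1 - (s2 (s1 Q2) * d1) * d2 := by ring
    rw [t3, t4, hQ2, hs1Q2, hs2Q2, hs21Q2]
    have he : e = d1 + d2 := by simp only [e, d1, d2]; ring
    rw [he]; ring
  have hd2 : d2 ≠ 0 := X_sub_ne b c hbc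
  exact mul_right_cancel₀ hd2 key2

theorem demL_braid (a b c : Fin n) (hab : a ≠ b) (hbc : b ≠ c) (hac : a ≠ c) (P : R) :
    demL (K := K) b c hbc (demL (K := K) a b hab (demL (K := K) b c hbc P)) =
    demL (K := K) a b hab (demL (K := K) b c hbc (demL (K := K) a b hab P)) := by
  have h1 := demL_key a b c hab hbc hac P
  have h2 := demL_key c b a hbc.symm hab.symm (Ne.symm hac) P
  have f1 : ∀ Q : R, demL (K := K) b a hab.symm Q = - demL (K := K) a b hab Q :=
    fun Q => demL_flip a b hab Q
  have f2 : ∀ Q : R, demL (K := K) c b hbc.symm Q = - demL (K := K) b c hbc Q :=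
    fun Q => demL_flip b c hbc Q
  simp only [f1, f2, map_neg] at h2
  rw [Equiv.swap_comm c b, Equiv.swap_comm b a] at h2
  have hbr : rename (Equiv.swap b c) (rename (Equiv.swap a b)
        (rename (Equiv.swap b c) P))
      = rename (Equiv.swap a b) (rename (Equiv.swap b c)
        ((rename (Equiv.swap a b) : R →ₐ[K] R) P)) := by
    rw [rename_rename, rename_rename, rename_rename, rename_rename]
    have e1 : (Equiv.swap b c : Equiv.Perm (Fin n)) * Equiv.swap a b * Equiv.swap b c
        = Equiv.swap a c := by
      have h := Equiv.swap_apply_apply (Equiv.swap b c : Equiv.Perm (Fin n)) a b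
      rw [Equiv.swap_apply_of_ne_of_ne hab hac, Equiv.swap_apply_left, Equiv.swap_inv] at h
      exact h.symm
    have e2 : (Equiv.swap a b : Equiv.Perm (Fin n)) * Equiv.swap b c * Equiv.swap a b
        = Equiv.swap a c := by
      have h := Equiv.swap_apply_apply (Equiv.swap a b : Equiv.Perm (Fin n)) b c
      rw [Equiv.swap_apply_right, Equiv.swap_apply_of_ne_of_ne hac.symm hbc.symm,
        Equiv.swap_inv] at h
      exact h.symm
    have l : ⇑(Equiv.swap b c) ∘ ⇑(Equiv.swap a b) ∘ ⇑(Equiv.swap b c)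
        = ⇑(Equiv.swap a c : Equiv.Perm (Fin n)) := by
      rw [← e1]; rfl
    have r : ⇑(Equiv.swap a b) ∘ ⇑(Equiv.swap b c) ∘ ⇑(Equiv.swap a b)
        = ⇑(Equiv.swap a c : Equiv.Perm (Fin n)) := by
      rw [← e2]; rfl
    calc rename (⇑(Equiv.swap b c) ∘ ⇑(Equiv.swap a b) ∘ ⇑(Equiv.swap b c)) P
        = rename (⇑(Equiv.swap a c : Equiv.Perm (Fin n))) P := by rw [l]
      _ = rename (⇑(Equiv.swap a b) ∘ ⇑(Equiv.swap b c) ∘ ⇑(Equiv.swap a b)) P := by rw [r]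
  apply mul_right_cancel₀ (show ((X b - X a) * (X c - X b) * (X c - X a) : R) ≠ 0 from
    mul_ne_zero (mul_ne_zero (X_sub_ne a b hab) (X_sub_ne b c hbc)) (X_sub_ne a c hac))
  rw [h1]
  linear_combination -h2 - hbr


theorem rename_demL' (σ : Equiv.Perm (Fin n)) (a b a' b' : Fin n) (hab : a ≠ b)
    (hab' : a' ≠ b') (ha : σ a = a') (hb : σ b = b') (P : R) :
    rename σ (demL (K := K) a b hab P) = demL a' b' hab' (rename σ P) := by
  subst ha; subst hb; exact rename_demL σ a b hab hab' P

theorem demL_congr (a b a' b' : Fin n) (hab : a ≠ b) (hab' : a' ≠ b')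
    (ha : a = a') (hb : b = b') : demL (K := K) a b hab = demL a' b' hab' := by
  subst ha; subst hb; rfl

theorem demL_comm (a b c d : Fin n) (hab : a ≠ b) (hcd : c ≠ d)
    (hca : c ≠ a) (hcb : c ≠ b) (hda : d ≠ a) (hdb : d ≠ b) (P : R) :
    demL (K := K) a b hab (demL (K := K) c d hcd P) =
      demL (K := K) c d hcd (demL (K := K) a b hab P) := by
  apply dcancel hab
  rw [demL_spec, rename_demL' (Equiv.swap a b) c d c d hcd hcd
    (Equiv.swap_apply_of_ne_of_ne hca hcb) (Equiv.swap_apply_of_ne_of_ne hda hdb)]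
  have hminv : rename (Equiv.swap c d) (X b - X a : R) = X b - X a := by
    rw [map_sub, rename_X, rename_X, Equiv.swap_apply_of_ne_of_ne hcb.symm hdb.symm,
      Equiv.swap_apply_of_ne_of_ne hca.symm hda.symm]
  rw [← map_sub, ← demL_spec a b hab P, mul_comm, demL_invariant_mul c d hcd _ _ hminv,
    mul_comm]

theorem lo_ne_hi (k : Fin (n - 1)) : NHGen.lo k ≠ NHGen.hi (n := n) k :=
  Fin.ne_of_val_ne (by simp [NHGen.lo, NHGen.hi])

/-- The image of each generator of `H_n` in `End K P_n`. -/
noncomputable def genImage (K : Type) [Field K] {n : ℕ} :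
    NHGen n → Module.End K (MvPolynomial (Fin n) K)
  | .x i => LinearMap.mulLeft K (X i)
  | .t k => demL (NHGen.lo k) (NHGen.hi k) (lo_ne_hi k)

/-- The algebra map from the free algebra. -/
noncomputable def phi0 (K : Type) [Field K] (n : ℕ) :
    FreeAlgebra K (NHGen n) →ₐ[K] Module.End K (MvPolynomial (Fin n) K) :=
  FreeAlgebra.lift K (genImage K)

theorem hrel (K : Type) [Field K] (n : ℕ) :
    ∀ ⦃x y : FreeAlgebra K (NHGen n)⦄, NHRel K n x y → phi0 K n x = phi0 K n y := by
  intro x y h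
  induction h with
  | xx i j =>
    apply LinearMap.ext; intro P
    simp only [phi0, map_mul, FreeAlgebra.lift_ι_apply, genImage, Module.End.mul_apply,
      LinearMap.mulLeft_apply]
    ring
  | tsq k =>
    apply LinearMap.ext; intro P
    simp only [phi0, map_mul, map_zero, FreeAlgebra.lift_ι_apply, genImage,
      Module.End.mul_apply, LinearMap.zero_apply]
    exact demL_demL _ _ _ P
  | tx k i =>
    have hlh := lo_ne_hi (n := n) k
    rcases eq_or_ne i (NHGen.hi k) with hib | hib
    · rw [if_pos hib, if_neg (hib ▸ hlh.symm : i ≠ NHGen.lo k)]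
      apply LinearMap.ext; intro P
      simp only [phi0, map_sub, map_mul, map_one, map_zero, FreeAlgebra.lift_ι_apply,
        genImage, Module.End.mul_apply, LinearMap.sub_apply, LinearMap.mulLeft_apply,
        Module.End.one_apply, LinearMap.zero_apply, sub_zero, hib, Equiv.swap_apply_right]
      apply dcancel hlh
      have h1 := demL_spec (K := K) (NHGen.lo k) (NHGen.hi k) hlh (X (NHGen.hi k) * P)
      have h2 := demL_spec (K := K) (NHGen.lo k) (NHGen.hi k) hlh P
      have hr : (rename (Equiv.swap (NHGen.lo k) (NHGen.hi k))) (X (NHGen.hi k) * P)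
          = X (NHGen.lo k) * (rename (Equiv.swap (NHGen.lo k) (NHGen.hi k))) P := by
        rw [map_mul, rename_X, Equiv.swap_apply_right]
      rw [hr] at h1
      linear_combination h1 - (X (NHGen.lo k) : MvPolynomial (Fin n) K) * h2
    rcases eq_or_ne i (NHGen.lo k) with hia | hia
    · rw [if_neg hib, if_pos hia]
      apply LinearMap.ext; intro P
      simp only [phi0, map_sub, map_mul, map_one, map_zero, FreeAlgebra.lift_ι_apply,
        genImage, Module.End.mul_apply, LinearMap.sub_apply, LinearMap.mulLeft_apply,
        Module.End.one_apply, LinearMap.zero_apply, zero_sub, map_neg,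
        LinearMap.neg_apply, hia, Equiv.swap_apply_left]
      apply dcancel hlh
      have h1 := demL_spec (K := K) (NHGen.lo k) (NHGen.hi k) hlh (X (NHGen.lo k) * P)
      have h2 := demL_spec (K := K) (NHGen.lo k) (NHGen.hi k) hlh P
      have hr : (rename (Equiv.swap (NHGen.lo k) (NHGen.hi k))) (X (NHGen.lo k) * P)
          = X (NHGen.hi k) * (rename (Equiv.swap (NHGen.lo k) (NHGen.hi k))) P := by
        rw [map_mul, rename_X, Equiv.swap_apply_left]
      rw [hr] at h1
      linear_combination h1 - (X (NHGen.hi k) : MvPolynomial (Fin n) K) * h2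
    · rw [if_neg hib, if_neg hia]
      apply LinearMap.ext; intro P
      simp only [phi0, map_sub, map_mul, map_zero, FreeAlgebra.lift_ι_apply,
        genImage, Module.End.mul_apply, LinearMap.sub_apply, LinearMap.mulLeft_apply,
        LinearMap.zero_apply, sub_self, Equiv.swap_apply_of_ne_of_ne hia hib]
      apply dcancel hlh
      have h1 := demL_spec (K := K) (NHGen.lo k) (NHGen.hi k) hlh (X i * P)
      have h2 := demL_spec (K := K) (NHGen.lo k) (NHGen.hi k) hlh P
      have hr : (rename (Equiv.swap (NHGen.lo k) (NHGen.hi k))) (X i * P)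
          = X i * (rename (Equiv.swap (NHGen.lo k) (NHGen.hi k))) P := by
        rw [map_mul, rename_X, Equiv.swap_apply_of_ne_of_ne hia hib]
      rw [hr] at h1
      linear_combination h1 - (X i : MvPolynomial (Fin n) K) * h2
  | tt k l h =>
    apply LinearMap.ext; intro P
    simp only [phi0, map_mul, FreeAlgebra.lift_ι_apply, genImage, Module.End.mul_apply]
    have hkl := k.isLt
    have hll := l.isLt
    exact demL_comm _ _ _ _ (lo_ne_hi k) (lo_ne_hi l)
      (Fin.ne_of_val_ne (by simp only [NHGen.lo, NHGen.hi]; omega))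
      (Fin.ne_of_val_ne (by simp only [NHGen.lo, NHGen.hi]; omega))
      (Fin.ne_of_val_ne (by simp only [NHGen.lo, NHGen.hi]; omega))
      (Fin.ne_of_val_ne (by simp only [NHGen.lo, NHGen.hi]; omega)) P
  | braid k l h =>
    apply LinearMap.ext; intro P
    simp only [phi0, map_mul, FreeAlgebra.lift_ι_apply, genImage, Module.End.mul_apply]
    have hbc : NHGen.hi (n := n) k ≠ NHGen.hi l :=
      Fin.ne_of_val_ne (by simp only [NHGen.hi]; omega)
    have e : demL (K := K) (NHGen.lo l) (NHGen.hi l) (lo_ne_hi l)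
        = demL (NHGen.hi k) (NHGen.hi l) hbc :=
      demL_congr _ _ _ _ _ _ (Fin.ext (by simp only [NHGen.lo, NHGen.hi]; omega)) rfl
    rw [e]
    exact demL_braid (NHGen.lo k) (NHGen.hi k) (NHGen.hi l) (lo_ne_hi k) hbc
      (Fin.ne_of_val_ne (by simp only [NHGen.lo, NHGen.hi]; omega)) P

/-- The representation of `H_n` on polynomials. -/
noncomputable def phi (K : Type) [Field K] (n : ℕ) :
    NilHecke K n →ₐ[K] Module.End K (MvPolynomial (Fin n) K) :=
  RingQuot.liftAlgHom K ⟨phi0 K n, hrel K n⟩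

theorem phi_mk (K : Type) [Field K] (n : ℕ) (x : FreeAlgebra K (NHGen n)) :
    phi K n (RingQuot.mkAlgHom K (NHRel K n) x) = phi0 K n x :=
  RingQuot.liftAlgHom_mkAlgHom_apply _ _ _ _

end NHAux

/-- The assignment `x_k ↦ (multiplication by x_k)`,
`τ_k ↦ (Demazure operator ∂_k)` on `P_n = K[x_1,…,x_n]` defines a well-defined
`K`-algebra homomorphism `H_n → End_{P_n^{S_n}}(P_n)`: there is a `K`-algebra map
`φ` from the presented algebra `H_n` to the endomorphisms of `P_n`, whose values are
`P_n^{S_n}`-linear, sending `x_k` to multiplication by `x_k` and `τ_k` to the operator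
characterized by `(φ τ_k P)·(x_{k+1} − x_k) = P − s_k(P)`. -/
theorem nilHecke_polynomial_representation (K : Type) [Field K] (n : ℕ) :
    ∃ φ : NilHecke K n →ₐ[K] Module.End K (MvPolynomial (Fin n) K),
      (∀ (h : NilHecke K n) (s : MvPolynomial (Fin n) K),
        s ∈ symmetricSubalgebra (Fin n) K →
        ∀ P : MvPolynomial (Fin n) K, φ h (s * P) = s * φ h P) ∧
      (∀ (i : Fin n) (P : MvPolynomial (Fin n) K), φ (xgen i) P = X i * P) ∧
      (∀ (k : Fin (n - 1)) (P : MvPolynomial (Fin n) K),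
        φ (tgen k) P * (X (NHGen.hi k) - X (NHGen.lo k)) =
          P - rename (Equiv.swap (NHGen.lo k) (NHGen.hi k)) P) := by
  classical
  refine ⟨NHAux.phi K n, ?_, ?_, ?_⟩
  · intro h s hs P
    obtain ⟨y, rfl⟩ := RingQuot.mkAlgHom_surjective K (NHRel K n) h
    rw [NHAux.phi_mk]
    have hsym : ∀ e : Equiv.Perm (Fin n), rename e s = s :=
      (mem_symmetricSubalgebra s).mp hs
    induction y using FreeAlgebra.induction generalizing P with
    | grade0 r =>
      rw [AlgHom.commutes, Module.algebraMap_end_apply, Module.algebraMap_end_apply]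
      exact (mul_smul_comm r s P).symm
    | grade1 g =>
      rw [NHAux.phi0, FreeAlgebra.lift_ι_apply]
      cases g with
      | x i =>
        simp only [NHAux.genImage, LinearMap.mulLeft_apply]
        ring
      | t k =>
        simp only [NHAux.genImage]
        exact NHAux.demL_invariant_mul _ _ _ s P (hsym _)
    | mul y z hy hz =>
      rw [map_mul (NHAux.phi0 K n) y z, Module.End.mul_apply, Module.End.mul_apply, hz, hy]
    | add y z hy hz =>
      rw [map_add (NHAux.phi0 K n) y z, LinearMap.add_apply, LinearMap.add_apply, hy, hz, mul_add]
  · intro i P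
    rw [xgen, NHAux.phi_mk, NHAux.phi0, FreeAlgebra.lift_ι_apply]
    simp only [NHAux.genImage, LinearMap.mulLeft_apply]
  · intro k P
    rw [tgen, NHAux.phi_mk, NHAux.phi0, FreeAlgebra.lift_ι_apply]
    simp only [NHAux.genImage]
    exact NHAux.demL_spec _ _ _ P
end
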